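/- arXiv:1705.08159 — 10 statements merged into one kernel-verified Lean document; each statement's English description precedes it below -/
import Mathlib

section
/- Let (K,v) be a Henselian valued field with valuation ring R, residue field k of characteristic not dividing d!. Let φ = ⟨a₁,...,aₙ⟩ be a diagonal unit form of degree d over R (i.e., all aᵢ ∈ R^× so that the residue form φ̄ over k is nondegenerate). Then φ is isotropic over K if and only if φ̄ = ⟨ā₁,...,āₙ⟩ is isotropic over k. -/
def IsotropicDiag (K : Type*) [Field K] (d : ℕ) {ι : Type*} [Fintype ι] (a : ι → K) : Prop :=
  ∃ x : ι → K, x ≠ 0 ∧ ∑ i, a i * x i ^ d = 0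

/-- **Let `(K,v)` be a Henselian valued field** (formalized by its valuation ring `R`, a
Henselian local valuation ring with fraction field `K = Frac R`) **with residue field `k` of
characteristic not dividing `d!`.  A diagonal unit form `φ = ⟨a₁,…,aₙ⟩` of degree `d` over `R`
(all `aᵢ ∈ R^×`) is isotropic over `K` if and only if the residue form `φ̄ = ⟨ā₁,…,āₙ⟩` is
isotropic over `k`.** -/
theorem diag_unit_form_isotropic_iff_residue
    (R : Type*) [CommRing R] [IsDomain R] [ValuationRing R] [HenselianLocalRing R]
    (d : ℕ) (hd : 1 ≤ d) (hchar : (d.factorial : IsLocalRing.ResidueField R) ≠ 0)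
    (n : ℕ) (a : Fin n → R) (ha : ∀ i, IsUnit (a i)) :
    IsotropicDiag (FractionRing R) d (fun i => algebraMap R (FractionRing R) (a i)) ↔
      IsotropicDiag (IsLocalRing.ResidueField R) d (fun i => IsLocalRing.residue R (a i)) := by
  classical
  set K := FractionRing R
  set φ := algebraMap R K with hφ
  have hinj : Function.Injective φ := IsFractionRing.injective R K
  set π := IsLocalRing.residue R with hπ
  constructor
  · rintro ⟨x, hx, hsum⟩
    obtain ⟨i₀, hi₀⟩ := Function.ne_iff.mp hx
    have : Nonempty (Fin n) := ⟨i₀⟩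
    set v := ValuationRing.valuation R K with hv
    obtain ⟨j, -, hj⟩ := Finset.exists_max_image Finset.univ (fun i => v (x i))
      ⟨i₀, Finset.mem_univ _⟩
    have hxj : x j ≠ 0 := by
      intro h
      have h0 : v (x i₀) ≤ 0 := by simpa only [h, map_zero] using hj i₀ (Finset.mem_univ _)
      have : v (x i₀) = 0 := le_antisymm h0 zero_le'
      exact hi₀ (v.zero_iff.mp this)
    have hy : ∀ i, ∃ r : R, φ r = x i / x j := by
      intro i
      refine (ValuationRing.mem_integer_iff R K _).mp ?_
      rw [Valuation.mem_integer_iff, map_div₀]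
      exact div_le_one₀ (lt_of_le_of_ne zero_le' (Ne.symm (v.ne_zero_iff.mpr hxj)))
        |>.mpr (hj i (Finset.mem_univ _))
    choose y hy using hy
    have hyj : y j = 1 := by
      apply hinj
      rw [hy j, div_self hxj, map_one]
    refine ⟨fun i => π (y i), ?_, ?_⟩
    · intro h
      have := congrFun h j
      rw [hyj] at this
      simp at this
    · have hR : ∑ i, a i * y i ^ d = 0 := by
        apply hinj
        rw [map_sum, map_zero]
        have : ∀ i, φ (a i * y i ^ d) = φ (a i) * x i ^ d * (x j ^ d)⁻¹ := by
          intro i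
          rw [map_mul, map_pow, hy i, div_pow, div_eq_mul_inv, mul_assoc]
        simp_rw [this]
        rw [← Finset.sum_mul, hsum, zero_mul]
      calc ∑ i, π (a i) * π (y i) ^ d = π (∑ i, a i * y i ^ d) := by
            rw [map_sum]; simp [map_mul, map_pow]
        _ = 0 := by rw [hR, map_zero]
  · rintro ⟨x, hx, hsum⟩
    obtain ⟨j, hj⟩ := Function.ne_iff.mp hx
    simp only [Pi.zero_apply] at hj
    choose y hy using fun i => Ideal.Quotient.mk_surjective (I := IsLocalRing.maximalIdeal R) (x i)
    have hy : ∀ i, π (y i) = x i := hy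
    set u := (ha j).unit with hu
    set c : R := ↑u⁻¹ * ∑ i ∈ Finset.univ.erase j, a i * y i ^ d with hc
    set f : Polynomial R := Polynomial.X ^ d + Polynomial.C c with hf
    have hmonic : f.Monic := Polynomial.monic_X_pow_add_C c (by omega)
    have hajc : a j * c = ∑ i ∈ Finset.univ.erase j, a i * y i ^ d := by
      rw [hc, ← mul_assoc]
      have : a j * ↑u⁻¹ = 1 := by
        rw [hu]; exact_mod_cast (ha j).unit.mul_inv
      rw [this, one_mul]
    have hsum' : π (a j) * (x j ^ d + π c) = 0 := by
      have e1 : π (a j * c) = ∑ i ∈ Finset.univ.erase j, π (a i) * x i ^ d := by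
        rw [hajc, map_sum]
        refine Finset.sum_congr rfl fun i _ => ?_
        rw [map_mul, map_pow, hy i]
      calc π (a j) * (x j ^ d + π c)
          = π (a j) * x j ^ d + π (a j * c) := by rw [mul_add, ← map_mul]
        _ = ∑ i, π (a i) * x i ^ d := by
            rw [e1]
            exact Finset.add_sum_erase _ (fun i => π (a i) * x i ^ d) (Finset.mem_univ j)
        _ = 0 := hsum
    have haju : π (a j) ≠ 0 := (IsLocalRing.residue_ne_zero_iff_isUnit _).mpr (ha j)
    have h1 : f.eval (y j) ∈ IsLocalRing.maximalIdeal R := by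
      rw [← IsLocalRing.residue_eq_zero_iff]
      have : f.eval (y j) = y j ^ d + c := by simp [hf]
      rw [this]
      have : π (y j ^ d + c) = x j ^ d + π c := by
        rw [map_add, map_pow, hy j]
      rw [this]
      exact (mul_eq_zero.mp hsum').resolve_left haju
    have h2 : IsUnit (f.derivative.eval (y j)) := by
      rw [← IsLocalRing.residue_ne_zero_iff_isUnit]
      have hder : f.derivative = Polynomial.C (d : R) * Polynomial.X ^ (d - 1) := by
        simp [hf, Polynomial.derivative_X_pow]
      have hde : π (f.derivative.eval (y j)) = (d : _) * x j ^ (d - 1) := by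
        rw [hder]; simp [hy j]
      rw [hde]
      intro h0
      rcases mul_eq_zero.mp h0 with h | h
      · obtain ⟨m, rfl⟩ : ∃ m, d = m + 1 := ⟨d - 1, by omega⟩
        apply hchar
        rw [Nat.factorial_succ]
        push_cast
        push_cast at h
        rw [h, zero_mul]
      · exact pow_ne_zero _ hj h
    obtain ⟨t, hroot, hmem⟩ := HenselianLocalRing.is_henselian f hmonic (y j) h1 h2
    have hπt : π t = x j := by
      have : π (t - y j) = 0 := (IsLocalRing.residue_eq_zero_iff _).mpr hmem
      rw [map_sub, sub_eq_zero] at this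
      rw [this, hy j]
    have ht0 : t ≠ 0 := by
      intro h; rw [h, map_zero] at hπt; exact hj hπt.symm
    set z : Fin n → R := Function.update y j t with hz
    have hzsum : ∑ i, a i * z i ^ d = 0 := by
      rw [← Finset.add_sum_erase _ _ (Finset.mem_univ j)]
      have e1 : z j = t := Function.update_self j t y
      have e2 : ∑ i ∈ Finset.univ.erase j, a i * z i ^ d
          = ∑ i ∈ Finset.univ.erase j, a i * y i ^ d := by
        refine Finset.sum_congr rfl fun i hi => ?_
        rw [hz, Function.update_of_ne (Finset.ne_of_mem_erase hi)]
      rw [e1, e2, ← hajc]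
      have : f.eval t = 0 := hroot
      have : t ^ d + c = 0 := by simpa [hf] using this
      calc a j * t ^ d + a j * c = a j * (t ^ d + c) := by ring
        _ = 0 := by rw [this, mul_zero]
    refine ⟨fun i => φ (z i), ?_, ?_⟩
    · intro h
      have := congrFun h j
      simp only [Pi.zero_apply] at this
      rw [hz, Function.update_self] at this
      exact ht0 (hinj (by rw [this, map_zero]))
    · calc ∑ i, φ (a i) * φ (z i) ^ d = φ (∑ i, a i * z i ^ d) := by
            rw [map_sum]; simp [map_mul, map_pow]
        _ = 0 := by rw [hzsum, map_zero]
end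

section
/- Let (K,v) be a Henselian valued field with value group Γ and residue field k of characteristic not dividing d!. Let φ = π₁φ₁ ⊥ ⋯ ⊥ π_rφ_r be a diagonal form of degree d over K, where each φᵢ is a diagonal unit form over the valuation ring and the values v(πᵢ) are pairwise distinct in Γ/dΓ. Then φ is isotropic over K if and only if some residue form φ̄ᵢ is isotropic over k. -/
open IsLocalRing Polynomial in
theorem aux_lift (R : Type*) [CommRing R] [HenselianLocalRing R]
    (d : ℕ) (hd : 1 ≤ d) (hchar : (d : ResidueField R) ≠ 0)
    {ι : Type*} [Fintype ι] (a : ι → R) (ha : ∀ j, IsUnit (a j))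
    (h : IsotropicDiag (ResidueField R) d (fun j => residue R (a j))) :
    ∃ x : ι → R, (∃ j, IsUnit (x j)) ∧ ∑ j, a j * x j ^ d = 0 := by
  classical
  obtain ⟨xb, hxb, hsum⟩ := h
  obtain ⟨j0, hj0⟩ : ∃ j, xb j ≠ 0 := by
    by_contra h'; push_neg at h'; exact hxb (funext h')
  choose y hy using fun j => residue_surjective (R := R) (xb j)
  set u := (ha j0).unit with hu_def
  have hua : (u : R) = a j0 := (ha j0).unit_spec
  set c := ∑ j ∈ Finset.univ.erase j0, a j * y j ^ d with hc_def
  set f : R[X] := X ^ d + C ((↑u⁻¹ : R) * c) with hf_def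
  have hmonic : f.Monic := monic_X_pow_add_C _ (by omega)
  have hres_c : residue R c = - (residue R (a j0) * xb j0 ^ d) := by
    rw [← Finset.add_sum_erase _ _ (Finset.mem_univ j0)] at hsum
    have hc : residue R c = ∑ j ∈ Finset.univ.erase j0, residue R (a j) * xb j ^ d := by
      simp [hc_def, map_sum, map_mul, map_pow, hy]
    rw [hc]; linear_combination hsum
  have huinv : residue R (↑u⁻¹ : R) * residue R (a j0) = 1 := by
    rw [← map_mul, ← hua, u.inv_mul, map_one]
  have heval : f.eval (y j0) ∈ maximalIdeal R := by
    rw [← residue_eq_zero_iff]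
    have : f.eval (y j0) = y j0 ^ d + (↑u⁻¹ : R) * c := by simp [hf_def]
    rw [this, map_add, map_mul, map_pow, hy, hres_c]
    linear_combination -(xb j0 ^ d) * huinv
  have hderiv : IsUnit (f.derivative.eval (y j0)) := by
    have : f.derivative.eval (y j0) = (d : R) * y j0 ^ (d - 1) := by
      simp [hf_def, derivative_X_pow]
    rw [← residue_ne_zero_iff_isUnit, this, map_mul, map_pow, hy, map_natCast]
    exact mul_ne_zero hchar (pow_ne_zero _ hj0)
  obtain ⟨t, hroot, ht⟩ := HenselianLocalRing.is_henselian f hmonic (y j0) heval hderiv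
  have h0 : t ^ d + (↑u⁻¹ : R) * c = 0 := by simpa [hf_def, Polynomial.IsRoot] using hroot
  have htu : IsUnit t := by
    rw [← residue_ne_zero_iff_isUnit]
    have : residue R t = residue R (y j0) := by
      rwa [← sub_eq_zero, ← map_sub, residue_eq_zero_iff]
    rw [this, hy]; exact hj0
  refine ⟨Function.update y j0 t, ⟨j0, by simpa using htu⟩, ?_⟩
  have hsplit : ∑ j, a j * Function.update y j0 t j ^ d = a j0 * t ^ d + c := by
    rw [← Finset.add_sum_erase _ _ (Finset.mem_univ j0)]
    congr 1
    · simp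
    · exact Finset.sum_congr rfl fun j hj => by
        rw [Function.update_of_ne (Finset.ne_of_mem_erase hj)]
  rw [hsplit]
  calc a j0 * t ^ d + c = ↑u * t ^ d + ↑u * ((↑u⁻¹ : R) * c) := by
        rw [Units.mul_inv_cancel_left, hua]
    _ = ↑u * (t ^ d + (↑u⁻¹ : R) * c) := by ring
    _ = 0 := by rw [h0, mul_zero]

/-- **Let `(K,v)` be a Henselian valued field** (given by its valuation ring `R`, Henselian,
with `K = Frac R`, valuation `v = ValuationRing.valuation R K` and value group `Γ`)
**with residue field `k` of characteristic not dividing `d!`.  Let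
`φ = π₁φ₁ ⊥ ⋯ ⊥ π_rφ_r` be a diagonal form of degree `d` over `K`, where each `φᵢ` is a
diagonal unit form over `R` and the values `v(πᵢ)` are pairwise distinct in `Γ/dΓ`.
Then `φ` is isotropic over `K` iff some residue form `φ̄ᵢ` is isotropic over `k`.** -/
theorem diag_form_isotropic_iff_some_residue
    (R : Type*) [CommRing R] [IsDomain R] [ValuationRing R] [HenselianLocalRing R]
    (d : ℕ) (hd : 1 ≤ d) (hchar : (d.factorial : IsLocalRing.ResidueField R) ≠ 0)
    (r : ℕ) (n : Fin r → ℕ) (π : Fin r → FractionRing R) (hπ : ∀ i, π i ≠ 0)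
    (a : (i : Fin r) → Fin (n i) → R) (ha : ∀ i j, IsUnit (a i j))
    (hdist : ∀ i j : Fin r, i ≠ j → ∀ γ : ValuationRing.ValueGroup R (FractionRing R),
      ValuationRing.valuation R (FractionRing R) (π i) ≠
        ValuationRing.valuation R (FractionRing R) (π j) * γ ^ d) :
    IsotropicDiag (FractionRing R) d
        (fun p : Σ i : Fin r, Fin (n i) =>
          π p.1 * algebraMap R (FractionRing R) (a p.1 p.2)) ↔
      ∃ i : Fin r, IsotropicDiag (IsLocalRing.ResidueField R) d
        (fun j => IsLocalRing.residue R (a i j)) := by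
  classical
  set v := ValuationRing.valuation R (FractionRing R) with hv
  have hchar' : (d : IsLocalRing.ResidueField R) ≠ 0 := by
    intro h0
    apply hchar
    have he : d = (d - 1) + 1 := (Nat.succ_pred_eq_of_pos hd).symm
    rw [he, Nat.factorial_succ, Nat.cast_mul, ← he, h0, zero_mul]
  have hd0 : d ≠ 0 := by omega
  constructor
  · rintro ⟨X, hX, hsum⟩
    by_contra hno
    push_neg at hno
    set b : Fin r → FractionRing R :=
      fun i => π i * ∑ j, algebraMap R (FractionRing R) (a i j) * X ⟨i, j⟩ ^ d with hb
    have hsum' : ∑ i, b i = 0 := by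
      rw [← hsum, ← Finset.univ_sigma_univ, Finset.sum_sigma]
      simp [hb, Finset.mul_sum, mul_assoc]
    -- key claim per nonzero block
    have key : ∀ i : Fin r, (∃ j, X ⟨i, j⟩ ≠ 0) →
        ∃ γ : ValuationRing.ValueGroup R (FractionRing R),
          γ ≠ 0 ∧ v (b i) = v (π i) * γ ^ d ∧ b i ≠ 0 := by
      rintro i ⟨j1, hj1⟩
      obtain ⟨jm, -, hjm⟩ := Finset.exists_max_image Finset.univ
        (fun j => v (X ⟨i, j⟩)) ⟨j1, Finset.mem_univ j1⟩
      have hum : X ⟨i, jm⟩ ≠ 0 := by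
        intro h0
        apply hj1
        have := hjm j1 (Finset.mem_univ j1)
        rw [h0, map_zero, le_zero_iff] at this
        exact (Valuation.zero_iff v).mp this
      set u : FractionRing R := X ⟨i, jm⟩ with hu
      have hvu : v u ≠ 0 := (Valuation.ne_zero_iff v).mpr hum
      have hz : ∀ j, ∃ z : R, algebraMap R (FractionRing R) z = X ⟨i, j⟩ / u := by
        intro j
        rw [← ValuationRing.mem_integer_iff]
        show v (X ⟨i, j⟩ / u) ≤ 1
        rw [Valuation.map_div]
        exact div_le_one_of_le₀ (hjm j (Finset.mem_univ j)) zero_le'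
      choose z hzz using hz
      have hzm : z jm = 1 := by
        apply IsFractionRing.injective R (FractionRing R)
        rw [hzz jm, ← hu, div_self hum, map_one]
      set s := ∑ j, a i j * z j ^ d with hs_def
      have hs : algebraMap R (FractionRing R) s =
          (∑ j, algebraMap R (FractionRing R) (a i j) * X ⟨i, j⟩ ^ d) / u ^ d := by
        rw [hs_def, map_sum, Finset.sum_div]
        refine Finset.sum_congr rfl fun j _ => ?_
        rw [map_mul, map_pow, hzz, div_pow, mul_div_assoc]
      have hbi : b i = π i * algebraMap R (FractionRing R) s * u ^ d := by
        rw [hb, mul_assoc]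
        rw [hs, div_mul_cancel₀ _ (pow_ne_zero d hum)]
      have hres : IsLocalRing.residue R s ≠ 0 := by
        intro h0
        apply hno i
        refine ⟨fun j => IsLocalRing.residue R (z j), ?_, ?_⟩
        · intro hzero
          have := congrFun hzero jm
          rw [hzm, map_one] at this
          exact one_ne_zero this
        · rw [← h0, hs_def, map_sum]
          exact Finset.sum_congr rfl fun j _ => by rw [map_mul, map_pow]
      have hsu : IsUnit s := (IsLocalRing.residue_ne_zero_iff_isUnit s).mp hres
      have hint : ∀ c : R, v (algebraMap R (FractionRing R) c) ≤ 1 := fun c =>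
        (Valuation.mem_integer_iff _ _).mp
          ((ValuationRing.mem_integer_iff R (FractionRing R) _).mpr ⟨c, rfl⟩)
      have hvs : v (algebraMap R (FractionRing R) s) = 1 := by
        obtain ⟨w, hw⟩ := hsu
        rw [← hw]
        refine le_antisymm (hint _) ?_
        have h1 : v (algebraMap R (FractionRing R) (w : R)) *
            v (algebraMap R (FractionRing R) ((w⁻¹ : Rˣ) : R)) = 1 := by
          rw [← Valuation.map_mul, ← map_mul, w.mul_inv, map_one, Valuation.map_one]
        calc (1 : ValuationRing.ValueGroup R (FractionRing R))
            = v (algebraMap R (FractionRing R) (w : R)) *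
              v (algebraMap R (FractionRing R) ((w⁻¹ : Rˣ) : R)) := h1.symm
          _ ≤ v (algebraMap R (FractionRing R) (w : R)) * 1 :=
              mul_le_mul_right (hint _) _
          _ = v (algebraMap R (FractionRing R) (w : R)) := mul_one _
      refine ⟨v u, hvu, ?_, ?_⟩
      · rw [hbi, Valuation.map_mul, Valuation.map_mul, hvs, mul_one, Valuation.map_pow]
      · rw [hbi]
        refine mul_ne_zero (mul_ne_zero (hπ i) ?_) (pow_ne_zero _ hum)
        rw [map_ne_zero_iff _ (IsFractionRing.injective R (FractionRing R))]
        exact hsu.ne_zero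
    set S := Finset.univ.filter (fun i : Fin r => ∃ j, X ⟨i, j⟩ ≠ 0) with hS_def
    have hmemS : ∀ i, i ∈ S ↔ ∃ j, X ⟨i, j⟩ ≠ 0 := by
      intro i; simp [hS_def]
    have hS : S.Nonempty := by
      obtain ⟨p, hp⟩ : ∃ p, X p ≠ 0 := by
        by_contra h'; push_neg at h'; exact hX (funext h')
      exact ⟨p.1, (hmemS p.1).mpr ⟨p.2, by rwa [Sigma.eta]⟩⟩
    have hS0 : ∑ i ∈ S, b i = 0 := by
      rw [← hsum']
      refine Finset.sum_subset (Finset.filter_subset _ _) fun i _ hiS => ?_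
      have hall : ∀ j, X ⟨i, j⟩ = 0 := by
        intro j
        by_contra hj
        exact hiS ((hmemS i).mpr ⟨j, hj⟩)
      simp [hb, hall, zero_pow hd0]
    choose γ hγ using fun (i : Fin r) (hi : i ∈ S) => key i ((hmemS i).mp hi)
    have hinj : ∀ i ∈ S, ∀ i' ∈ S, i ≠ i' → v (b i) ≠ v (b i') := by
      intro i hi i' hi' hne heq
      obtain ⟨hγi, hvi, -⟩ := hγ i hi
      obtain ⟨hγi', hvi', -⟩ := hγ i' hi'
      apply hdist i i' hne (γ i' hi' * (γ i hi)⁻¹)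
      rw [hvi, hvi'] at heq
      have hgd : (γ i hi) ^ d ≠ 0 := pow_ne_zero _ hγi
      refine mul_right_cancel₀ hgd ?_
      rw [heq, mul_pow, inv_pow, mul_assoc, mul_assoc, inv_mul_cancel₀ hgd, mul_one]
    obtain ⟨i0, hi0, hmax⟩ := Finset.exists_max_image S (fun i => v (b i)) hS
    have h0 : v (b i0) ≠ 0 := (Valuation.ne_zero_iff v).mpr (hγ i0 hi0).2.2
    have hvsum : v (∑ i ∈ S, b i) = v (b i0) := by
      refine Valuation.map_sum_eq_of_lt v hi0 fun i hi => ?_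
      simp only [Finset.mem_sdiff, Finset.mem_singleton] at hi
      exact lt_of_le_of_ne (hmax i hi.1) (hinj i hi.1 i0 hi0 hi.2)
    rw [hS0, map_zero] at hvsum
    exact h0 hvsum.symm
  · rintro ⟨i, hiso⟩
    obtain ⟨x, ⟨j0, hj0⟩, hx0⟩ := aux_lift R d hd hchar' (a i) (ha i) hiso
    have hcast : ∀ (e : n i = n i) (j : Fin (n i)), Fin.cast e j = j := fun e j =>
      Fin.ext (Fin.coe_cast e j)
    refine ⟨fun p => if h : p.1 = i then
        algebraMap R (FractionRing R) (x (Fin.cast (congrArg n h) p.2)) else 0, ?_, ?_⟩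
    · intro h
      have := congrFun h ⟨i, j0⟩
      rw [Pi.zero_apply, dif_pos rfl, hcast] at this
      rw [map_eq_zero_iff _ (IsFractionRing.injective R (FractionRing R))] at this
      exact hj0.ne_zero this
    · rw [← Finset.univ_sigma_univ, Finset.sum_sigma]
      refine (Finset.sum_eq_single i ?_ ?_).trans ?_
      · intro i' _ hne
        refine Finset.sum_eq_zero fun j _ => ?_
        dsimp only
        rw [dif_neg hne, zero_pow hd0, mul_zero]
      · intro h; exact absurd (Finset.mem_univ i) h
      · have : ∑ j : Fin (n i), π i * (algebraMap R (FractionRing R)) (a i j) *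
            algebraMap R (FractionRing R) (x j) ^ d = 0 := by
          have h2 : ∑ j : Fin (n i), π i * (algebraMap R (FractionRing R)) (a i j) *
              algebraMap R (FractionRing R) (x j) ^ d
              = π i * algebraMap R (FractionRing R) (∑ j, a i j * x j ^ d) := by
            rw [map_sum, Finset.mul_sum]
            refine Finset.sum_congr rfl fun j _ => ?_
            rw [map_mul, map_pow, mul_assoc]
          rw [h2, hx0, map_zero, mul_zero]
        refine Eq.trans ?_ this
        refine Finset.sum_congr rfl fun j _ => ?_
        dsimp only
        rw [dif_pos rfl, hcast]
end

section
/- Let (K,v) be a Henselian valued field with value group Γ and residue field k of characteristic not dividing d!. Then u_diag(d,K) = |Γ/dΓ| · u_diag(d,k), with the convention that the equality also holds when the values are infinite. -/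
noncomputable def uDiag (d : ℕ) (K : Type*) [Field K] : ℕ∞ :=
  ⨆ (n : ℕ) (_ : ∃ a : Fin n → K, (∀ i, a i ≠ 0) ∧ ¬ IsotropicDiag K d a), (n : ℕ∞)

set_option linter.unusedSectionVars false

namespace UDiagAux

def AnisoDim (F : Type*) [Field F] (d n : ℕ) : Prop :=
  ∃ a : Fin n → F, (∀ i, a i ≠ 0) ∧ ¬ IsotropicDiag F d a

variable {F : Type*} [Field F] {d : ℕ}

lemma uDiag_eq (F : Type*) [Field F] (d : ℕ) :
    uDiag d F = ⨆ (n : ℕ) (_ : AnisoDim F d n), (n : ℕ∞) := rfl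

lemma anisoDim_zero : AnisoDim F d 0 :=
  ⟨Fin.elim0, fun i => i.elim0, by rintro ⟨x, hx, -⟩; exact hx (funext fun i => i.elim0)⟩

lemma anisoDim_one (hd : 1 ≤ d) : AnisoDim F d 1 := by
  refine ⟨fun _ => 1, fun _ => one_ne_zero, ?_⟩
  rintro ⟨x, hx, hsum⟩
  rw [Fin.sum_univ_one, one_mul, pow_eq_zero_iff (by omega)] at hsum
  exact hx (funext fun i => by rw [Fin.eq_zero i]; exact hsum)

lemma not_isotropic_comp {ι ι' : Type*} [Fintype ι] [Fintype ι'] [DecidableEq ι]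
    (hd : 1 ≤ d) (a : ι → F) (e : ι' ↪ ι) (h : ¬ IsotropicDiag F d a) :
    ¬ IsotropicDiag F d (a ∘ e) := by
  rintro ⟨x, hx, hsum⟩
  classical
  set X : ι → F := fun i => if hi : ∃ j, e j = i then x hi.choose else 0 with hX
  have hXe : ∀ j, X (e j) = x j := by
    intro j
    have hex : ∃ j', e j' = e j := ⟨j, rfl⟩
    have := hex.choose_spec
    simp only [hX, dif_pos hex]
    congr 1
    exact e.injective this
  refine h ⟨X, ?_, ?_⟩
  · obtain ⟨j, hj⟩ := Function.ne_iff.mp hx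
    exact Function.ne_iff.mpr ⟨e j, by rw [hXe]; simpa using hj⟩
  · have hsub : ∑ i ∈ Finset.univ.image e, a i * X i ^ d = ∑ i, a i * X i ^ d := by
      refine Finset.sum_subset (Finset.subset_univ _) ?_
      intro i _ hi
      have hXi : X i = 0 := by
        show (if hi : ∃ j, e j = i then x hi.choose else 0) = 0
        rw [dif_neg]
        rintro ⟨j, rfl⟩
        exact hi (Finset.mem_image.mpr ⟨j, Finset.mem_univ _, rfl⟩)
      rw [hXi, zero_pow (by omega), mul_zero]
    rw [← hsub, Finset.sum_image (fun j _ j' _ h => e.injective h)]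
    simpa only [hXe, Function.comp_apply] using hsum

lemma anisoDim_mono (hd : 1 ≤ d) {m n : ℕ} (h : m ≤ n) (hn : AnisoDim F d n) :
    AnisoDim F d m := by
  obtain ⟨a, ha, hani⟩ := hn
  exact ⟨a ∘ Fin.castLEEmb h, fun i => ha _, not_isotropic_comp hd a (Fin.castLEEmb h) hani⟩

lemma le_uDiag {n : ℕ} (h : AnisoDim F d n) : (n : ℕ∞) ≤ uDiag d F :=
  le_iSup₂ (f := fun (n : ℕ) (_ : AnisoDim F d n) => (n : ℕ∞)) n h

lemma anisoDim_of_le (hd : 1 ≤ d) {n : ℕ} (h : (n : ℕ∞) ≤ uDiag d F) : AnisoDim F d n := by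
  rcases Nat.eq_zero_or_pos n with rfl | hn
  · exact anisoDim_zero
  by_contra hcon
  have hb : uDiag d F ≤ ((n - 1 : ℕ) : ℕ∞) := by
    rw [uDiag_eq]
    refine iSup₂_le fun m hm => ?_
    have : m < n := by
      by_contra hmn
      exact hcon (anisoDim_mono hd (by omega) hm)
    exact_mod_cast (by omega : m ≤ n - 1)
  have := h.trans hb
  rw [Nat.cast_le] at this
  omega

lemma uDiag_eq_top_of_forall (h : ∀ n : ℕ, AnisoDim F d n) : uDiag d F = ⊤ := by
  have h2 : ∀ n : ℕ, (n : ℕ∞) ≤ uDiag d F := fun n => le_uDiag (h n)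
  rcases eq_or_ne (uDiag d F) ⊤ with htop | htop
  · exact htop
  · lift uDiag d F to ℕ using htop with m hm
    have := h2 (m + 1)
    rw [Nat.cast_le] at this
    omega


section Val
variable (R : Type*) [CommRing R] [IsDomain R] [ValuationRing R]

local notation "K" => FractionRing R
local notation "v" => ValuationRing.valuation R (FractionRing R)
local notation "k" => IsLocalRing.ResidueField R
local notation "res" => IsLocalRing.residue R
local notation "Γ₀" => ValuationRing.ValueGroup R (FractionRing R)

lemma val_surjective (γ : ValuationRing.ValueGroup R (FractionRing R)) :
    ∃ x : K, v x = γ :=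
  ⟨Quotient.out γ, Quotient.out_eq γ⟩

lemma val_le_one (r : R) : v (algebraMap R K r) ≤ 1 :=
  (Valuation.mem_integer_iff _ _).mp ((ValuationRing.mem_integer_iff R K _).mpr ⟨r, rfl⟩)

lemma exists_algebraMap_eq (x : K) (h : v x ≤ 1) : ∃ r : R, algebraMap R K r = x :=
  (ValuationRing.mem_integer_iff R K x).mp ((Valuation.mem_integer_iff _ _).mpr h)

lemma isUnit_iff_val (r : R) : IsUnit r ↔ v (algebraMap R K r) = 1 := by
  constructor
  · rintro ⟨u, rfl⟩
    have h1 : v (algebraMap R K u) ≤ 1 := val_le_one R u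
    have h2 : v (algebraMap R K (u⁻¹ : Rˣ)) ≤ 1 := val_le_one R _
    have hmul : v (algebraMap R K u) * v (algebraMap R K (u⁻¹ : Rˣ)) = 1 := by
      rw [← Valuation.map_mul, ← map_mul, ← Units.val_mul]
      simp
    refine le_antisymm h1 ?_
    calc (1 : ValuationRing.ValueGroup R (FractionRing R))
        = v (algebraMap R K u) * v (algebraMap R K (u⁻¹ : Rˣ)) := hmul.symm
      _ ≤ v (algebraMap R K u) * 1 := mul_le_mul_right h2 _
      _ = v (algebraMap R K u) := mul_one _
  · intro h
    have hne : algebraMap R K r ≠ 0 := by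
      intro h0
      rw [h0, Valuation.map_zero] at h
      exact zero_ne_one h
    have hinv : v (algebraMap R K r)⁻¹ ≤ 1 := by
      have : v (algebraMap R K r) * v (algebraMap R K r)⁻¹ = 1 := by
        rw [← Valuation.map_mul, mul_inv_cancel₀ hne, Valuation.map_one]
      rw [h, one_mul] at this
      rw [this]
    obtain ⟨s, hs⟩ := exists_algebraMap_eq R _ hinv
    have : algebraMap R K (r * s) = algebraMap R K 1 := by
      rw [map_mul, map_one, hs, mul_inv_cancel₀ hne]
    exact IsUnit.of_mul_eq_one s (IsFractionRing.injective R K this)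

lemma residue_zero_of_val_lt_one (r : R) (h : v (algebraMap R K r) < 1) :
    IsLocalRing.residue R r = 0 := by
  rw [IsLocalRing.residue_eq_zero_iff]
  rw [IsLocalRing.mem_maximalIdeal, mem_nonunits_iff]
  rw [isUnit_iff_val R]
  exact fun h1 => absurd h1 (ne_of_lt h)


open Polynomial in
lemma lift_isotropic [HenselianLocalRing R] {d : ℕ} {ι : Type*} [Fintype ι] [DecidableEq ι]
    (hd : 1 ≤ d) (hchar : ((d : ℕ) : k) ≠ 0)
    (u : ι → R) (hu : ∀ i, IsUnit (u i))
    (y : ι → k) (j : ι) (hyj : y j ≠ 0)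
    (heq : ∑ i, res (u i) * y i ^ d = 0) :
    IsotropicDiag (FractionRing R) d (fun i => algebraMap R (FractionRing R) (u i)) := by
  obtain ⟨Y, hY⟩ : ∃ Y : ι → R, ∀ i, res (Y i) = y i :=
    ⟨fun i => (IsLocalRing.residue_surjective (y i)).choose,
     fun i => (IsLocalRing.residue_surjective (y i)).choose_spec⟩
  set w := (hu j).unit with hw
  have hwu : (w : R) = u j := (hu j).unit_spec
  set S : R := ∑ i ∈ Finset.univ.erase j, u i * Y i ^ d with hS
  have hresS : res S = ∑ i ∈ Finset.univ.erase j, res (u i) * y i ^ d := by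
    rw [hS, map_sum]
    exact Finset.sum_congr rfl fun i _ => by rw [map_mul, map_pow, hY]
  set f : R[X] := X ^ d + C ((↑w⁻¹ : R) * S) with hf
  have hmonic : f.Monic := monic_X_pow_add_C _ (by omega)
  have hevalYj : f.eval (Y j) = Y j ^ d + (↑w⁻¹ : R) * S := by
    simp [hf]
  have hresw : res (w : R) ≠ 0 := (IsLocalRing.residue_ne_zero_iff_isUnit _).mpr w.isUnit
  have hmem : f.eval (Y j) ∈ IsLocalRing.maximalIdeal R := by
    rw [← IsLocalRing.residue_eq_zero_iff, hevalYj]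
    have hkey : res (w : R) * res (Y j ^ d + (↑w⁻¹ : R) * S) = 0 := by
      rw [map_add, map_pow, hY, mul_add, map_mul, ← mul_assoc, ← map_mul]
      have : ((w : R) * (↑w⁻¹ : R)) = 1 := by
        rw [← Units.val_mul, mul_inv_cancel, Units.val_one]
      rw [this, map_one, one_mul, hwu, hresS, ← heq]
      rw [← Finset.add_sum_erase _ _ (Finset.mem_univ j)]
    rcases mul_eq_zero.mp hkey with h | h
    · exact absurd h hresw
    · exact h
  have hderiv : IsUnit (f.derivative.eval (Y j)) := by
    rw [← IsLocalRing.residue_ne_zero_iff_isUnit]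
    have : f.derivative = C ((d : R)) * X ^ (d - 1) := by
      rw [hf, derivative_add, derivative_C, add_zero, derivative_X_pow]
    rw [this]
    rw [eval_mul, eval_C, eval_pow, eval_X, map_mul, map_pow, hY, map_natCast]
    exact mul_ne_zero hchar (pow_ne_zero _ hyj)
  obtain ⟨a, hroot, hmema⟩ := HenselianLocalRing.is_henselian f hmonic (Y j) hmem hderiv
  have hresa : res a = y j := by
    have : res (a - Y j) = 0 := (IsLocalRing.residue_eq_zero_iff _).mpr hmema
    rw [map_sub, sub_eq_zero] at this
    rw [this, hY]
  have haroot : u j * a ^ d + S = 0 := by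
    have h0 : a ^ d + (↑w⁻¹ : R) * S = 0 := by
      have := hroot
      rw [Polynomial.IsRoot, hf] at this
      simpa using this
    have := congrArg (fun t => (w : R) * t) h0
    simp only [mul_zero, mul_add, ← mul_assoc] at this
    rw [← Units.val_mul, mul_inv_cancel, Units.val_one, one_mul, hwu] at this
    exact this
  set Z : ι → R := fun i => if i = j then a else Y i with hZ
  refine ⟨fun i => algebraMap R K (Z i), ?_, ?_⟩
  · refine Function.ne_iff.mpr ⟨j, ?_⟩
    simp only [hZ, if_pos rfl, Pi.zero_apply]
    rw [(map_eq_zero_iff _ (IsFractionRing.injective R (FractionRing R))).ne]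
    intro h0
    rw [h0, map_zero] at hresa
    exact hyj hresa.symm
  · have : ∑ i, (algebraMap R K (u i)) * (algebraMap R K (Z i)) ^ d
        = algebraMap R K (∑ i, u i * Z i ^ d) := by
      rw [map_sum]
      exact Finset.sum_congr rfl fun i _ => by rw [map_mul, map_pow]
    rw [this]
    have hsum : ∑ i, u i * Z i ^ d = 0 := by
      rw [← Finset.add_sum_erase _ _ (Finset.mem_univ j)]
      have h1 : Z j = a := if_pos rfl
      have h2 : ∑ i ∈ Finset.univ.erase j, u i * Z i ^ d = S := by
        refine Finset.sum_congr rfl fun i hi => ?_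
        rw [hZ]
        simp only [if_neg (Finset.mem_erase.mp hi).1]
      rw [h1, h2, haroot]
    rw [hsum, map_zero]


lemma descend_isotropic {d r : ℕ} {ι : Type*} [Fintype ι] [DecidableEq ι]
    (hd : 1 ≤ d)
    (b : Fin r → K) (hb : ∀ j, b j ≠ 0)
    (hclass : ∀ j j' : Fin r, ∀ c : K, c ≠ 0 →
      v (b j) = v (b j') * (v c) ^ d → j = j')
    (u : Fin r → ι → R) (hu : ∀ j i, IsUnit (u j i))
    (hiso : IsotropicDiag (FractionRing R) d
      (fun p : Fin r × ι => b p.1 * algebraMap R (FractionRing R) (u p.1 p.2))) :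
    ∃ j, ∃ y : ι → k, y ≠ 0 ∧ ∑ i, res (u j i) * y i ^ d = 0 := by
  classical
  obtain ⟨x, hx, hsum⟩ := hiso
  obtain ⟨p₁, hp₁⟩ := Function.ne_iff.mp hx
  have hxp₁ : x p₁ ≠ 0 := hp₁
  set g : Fin r × ι → ValuationRing.ValueGroup R (FractionRing R) :=
    fun p => v (b p.1) * (v (x p)) ^ d with hg
  obtain ⟨p₀, -, hmax⟩ := Finset.exists_max_image Finset.univ g ⟨p₁, Finset.mem_univ _⟩
  have hmax : ∀ p, g p ≤ g p₀ := fun p => hmax p (Finset.mem_univ p)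
  have hgp₁ : g p₁ ≠ 0 := by
    simp only [hg, mul_ne_zero_iff]
    exact ⟨(Valuation.ne_zero_iff _).mpr (hb _), pow_ne_zero _ ((Valuation.ne_zero_iff _).mpr hxp₁)⟩
  have hgp₀ : g p₀ ≠ 0 := fun h0 => hgp₁ (le_antisymm (h0 ▸ hmax p₁) zero_le')
  have hxp₀ : x p₀ ≠ 0 := by
    intro h0
    apply hgp₀
    simp [hg, h0, Valuation.map_zero, zero_pow (by omega : d ≠ 0)]
  set j₀ := p₀.1 with hj₀
  set t := x p₀ with ht
  set D : K := b j₀ * t ^ d with hD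
  have hDne : D ≠ 0 := mul_ne_zero (hb _) (pow_ne_zero _ hxp₀)
  have hvD : v D = g p₀ := by rw [hD, Valuation.map_mul, Valuation.map_pow]
  have hvDne : v D ≠ 0 := hvD ▸ hgp₀
  set z : Fin r × ι → K :=
    fun p => b p.1 * algebraMap R K (u p.1 p.2) * x p ^ d / D with hz
  have hzD : ∀ p, z p * D = b p.1 * algebraMap R K (u p.1 p.2) * x p ^ d :=
    fun p => div_mul_cancel₀ _ hDne
  have hvu : ∀ j i, v (algebraMap R K (u j i)) = 1 := fun j i => (isUnit_iff_val R _).mp (hu j i)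
  have hznum : ∀ p, v (z p) * v D = g p := by
    intro p
    rw [← Valuation.map_mul, hzD, Valuation.map_mul, Valuation.map_mul, hvu, mul_one,
      Valuation.map_pow]
  have hzle : ∀ p, v (z p) ≤ 1 := by
    intro p
    have h1 : v (z p) * v D ≤ 1 * v D := by
      rw [hznum, one_mul, hvD]; exact hmax p
    exact (mul_le_mul_iff_left₀ (zero_lt_iff.mpr hvDne)).mp h1
  have hzsum : ∑ p, z p = 0 := by
    rw [hz]
    rw [← Finset.sum_div]
    rw [hsum, zero_div]
  -- the scaled variables in the fiber over j₀
  set w : ι → K := fun i => x (j₀, i) / t with hw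
  have hwle : ∀ i, v (w i) ≤ 1 := by
    intro i
    have hpow : (v (w i)) ^ d ≤ 1 := by
      have h1 : g (j₀, i) ≤ g p₀ := hmax _
      have h2 : v (b j₀) * (v (x (j₀, i))) ^ d ≤ v (b j₀) * (v t) ^ d := by
        simpa [hg] using h1
      have h3 : (v (x (j₀, i))) ^ d ≤ (v t) ^ d :=
        (mul_le_mul_iff_right₀ (zero_lt_iff.mpr ((Valuation.ne_zero_iff _).mpr (hb j₀)))).mp h2
      have h4 : (v (w i)) ^ d * (v t) ^ d ≤ 1 * (v t) ^ d := by
        rw [one_mul, ← mul_pow, hw]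
        simp only []
        rw [← Valuation.map_mul, div_mul_cancel₀ _ hxp₀]
        exact h3
      exact (mul_le_mul_iff_left₀ (zero_lt_iff.mpr (pow_ne_zero _
        ((Valuation.ne_zero_iff _).mpr hxp₀)))).mp h4
    exact (pow_le_one_iff (by omega : d ≠ 0)).mp hpow
  choose W hW using fun i => exists_algebraMap_eq R (w i) (hwle i)
  choose Z hZ using fun p => exists_algebraMap_eq R (z p) (hzle p)
  set s : Fin r × ι → R := fun p => if p.1 = j₀ then u j₀ p.2 * W p.2 ^ d else Z p with hs
  have hsmap : ∀ p, algebraMap R K (s p) = z p := by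
    rintro ⟨pj, pi⟩
    by_cases hpj : pj = j₀
    · subst hpj
      rw [hs]
      simp only [if_pos, if_true, eq_self_iff_true]
      rw [map_mul, map_pow, hW, hz]
      have htne : t ≠ 0 := hxp₀
      have hbne : b j₀ ≠ 0 := hb j₀
      simp only [hw, hD]
      field_simp
      rw [mul_assoc, ← mul_pow, div_mul_cancel₀ _ htne]
    · rw [hs]; simp only [if_neg hpj]; exact hZ _
  have hssum : ∑ p, s p = 0 := by
    apply IsFractionRing.injective R (FractionRing R)
    rw [map_sum, map_zero]
    rw [Finset.sum_congr rfl fun p _ => hsmap p]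
    exact hzsum
  set y : ι → k := fun i => res (W i) with hy
  refine ⟨j₀, y, ?_, ?_⟩
  · refine Function.ne_iff.mpr ⟨p₀.2, ?_⟩
    have hwp : w p₀.2 = 1 := by
      rw [hw]
      simp only []
      rw [hj₀] at *
      have : x (p₀.1, p₀.2) = t := by rw [ht]
      rw [this, div_self hxp₀]
    have : W p₀.2 = 1 := by
      apply IsFractionRing.injective R (FractionRing R)
      rw [hW, hwp, map_one]
    simp [hy, this]
  · -- residues of s in other fibers vanish
    have hres0 : ∀ p : Fin r × ι, p.1 ≠ j₀ → res (s p) = 0 := by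
      rintro ⟨pj, pi⟩ hpj
      have hsz : algebraMap R K (s (pj, pi)) = z (pj, pi) := hsmap _
      by_cases hxp : x (pj, pi) = 0
      · have : z (pj, pi) = 0 := by
          rw [hz]
          simp only []
          rw [hxp, zero_pow (by omega : d ≠ 0), mul_zero, zero_div]
        apply residue_zero_of_val_lt_one R
        rw [hsz, this, Valuation.map_zero]
        exact zero_lt_iff.mpr one_ne_zero
      · apply residue_zero_of_val_lt_one R
        rw [hsz]
        rcases lt_or_eq_of_le (hzle (pj, pi)) with h | h
        · exact h
        · exfalso
          -- v (z p) = 1 forces the classes of b pj and b j₀ to agree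
          have h1 : v D = v (b pj) * (v (x (pj, pi))) ^ d := by
            have h2 := hznum (pj, pi)
            rw [h, one_mul] at h2
            rw [h2, hg]
          have hc : (t / x (pj, pi)) ≠ 0 := div_ne_zero hxp₀ hxp
          apply hpj
          refine hclass pj j₀ (t / x (pj, pi)) hc ?_
          have hvx : v (x (pj, pi)) ≠ 0 := (Valuation.ne_zero_iff _).mpr hxp
          have hvt : v t ≠ 0 := (Valuation.ne_zero_iff _).mpr hxp₀
          have key : v (b j₀) * (v t) ^ d = v (b pj) * (v (x (pj, pi))) ^ d := by
            rw [← h1, hvD, hg]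
          -- rearrange
          have hgoal : v (b pj) = v (b j₀) * ((v t) / v (x (pj, pi))) ^ d := by
            rw [div_pow, mul_div_assoc']
            rw [key]
            rw [mul_div_cancel_right₀ _ (pow_ne_zero _ hvx)]
          rw [hgoal, map_div₀]
    have hressum : ∑ p : Fin r × ι, res (s p) = 0 := by
      rw [← map_sum, hssum, map_zero]
    rw [Fintype.sum_prod_type] at hressum
    have houter : ∀ jj ∈ Finset.univ, jj ≠ j₀ → ∑ i, res (s (jj, i)) = 0 :=
      fun jj _ hjj => Finset.sum_eq_zero fun i _ => hres0 (jj, i) hjj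
    rw [Finset.sum_eq_single_of_mem j₀ (Finset.mem_univ _) houter] at hressum
    calc ∑ i, res (u j₀ i) * y i ^ d = ∑ i, res (s (j₀, i)) := by
          refine Finset.sum_congr rfl fun i _ => ?_
          simp [hs, hy, map_mul, map_pow]
      _ = 0 := hressum

lemma anisoDim_residue_of_same_class [HenselianLocalRing R] {d m : ℕ}
    (hd : 1 ≤ d) (hchar : ((d : ℕ) : k) ≠ 0)
    (a : Fin m → K) (ha : ∀ i, a i ≠ 0)
    (hclass : ∀ i i' : Fin m, ∃ c : K, c ≠ 0 ∧ v (a i) = v (a i') * (v c) ^ d)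
    (hani : ¬ IsotropicDiag (FractionRing R) d a) :
    AnisoDim (IsLocalRing.ResidueField R) d m := by
  classical
  rcases Nat.eq_zero_or_pos m with rfl | hm
  · exact anisoDim_zero
  set i₀ : Fin m := ⟨0, hm⟩ with hi₀
  choose c hc0 hcv using fun i => hclass i i₀
  set e : Fin m → K := fun i => a i₀ * c i ^ d with he
  have hene : ∀ i, e i ≠ 0 := fun i => mul_ne_zero (ha i₀) (pow_ne_zero _ (hc0 i))
  set u' : Fin m → K := fun i => a i / e i with hu'
  have hvu' : ∀ i, v (u' i) = 1 := by
    intro i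
    rw [hu']
    simp only []
    rw [map_div₀, he]
    simp only []
    rw [Valuation.map_mul, Valuation.map_pow, ← hcv i]
    exact div_self ((Valuation.ne_zero_iff _).mpr (ha i))
  choose U hU using fun i => exists_algebraMap_eq R (u' i) (le_of_eq (hvu' i))
  have hUu : ∀ i, IsUnit (U i) := fun i => (isUnit_iff_val R _).mpr (by rw [hU, hvu'])
  refine ⟨fun i => res (U i), fun i => (IsLocalRing.residue_ne_zero_iff_isUnit _).mpr (hUu i), ?_⟩
  rintro ⟨y, hy, hysum⟩
  obtain ⟨j, hyj⟩ := Function.ne_iff.mp hy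
  obtain ⟨x, hx, hxsum⟩ :=
    lift_isotropic R hd hchar U hUu y j hyj hysum
  refine hani ⟨fun i => x i / c i, ?_, ?_⟩
  · obtain ⟨j', hj'⟩ := Function.ne_iff.mp hx
    exact Function.ne_iff.mpr ⟨j', div_ne_zero hj' (hc0 j')⟩
  · have hterm : ∀ i : Fin m, a i * (x i / c i) ^ d = a i₀ * (algebraMap R K (U i) * x i ^ d) := by
      intro i
      have hai : a i = u' i * e i := (div_mul_cancel₀ _ (hene i)).symm
      rw [hU, hai, he]
      have := hc0 i
      field_simp
      rw [mul_assoc, ← mul_pow, mul_comm (c i), div_mul_cancel₀ _ this]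
    rw [Finset.sum_congr rfl fun i _ => hterm i, ← Finset.mul_sum]
    simpa using Or.inr hxsum


set_option maxHeartbeats 2000000 in
lemma main [HenselianLocalRing R] (d : ℕ) (hd : 1 ≤ d)
    (hchar : ((d.factorial : ℕ) : k) ≠ 0) :
    uDiag d (FractionRing R) =
      ENat.card (Γ₀ˣ ⧸ (powMonoidHom d : Γ₀ˣ →* Γ₀ˣ).range) *
        uDiag d (IsLocalRing.ResidueField R) := by
  classical
  set N := (powMonoidHom d : Γ₀ˣ →* Γ₀ˣ).range with hN
  have hdk : ((d : ℕ) : k) ≠ 0 := by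
    obtain ⟨e, rfl⟩ : ∃ e, d = e + 1 := ⟨d - 1, by omega⟩
    intro h0
    apply hchar
    rw [Nat.factorial_succ, Nat.cast_mul, h0, zero_mul]
  have vne : ∀ x : K, x ≠ 0 → v x ≠ 0 := fun x hx => (Valuation.ne_zero_iff _).mpr hx
  set cls : ∀ x : K, x ≠ 0 → Γ₀ˣ ⧸ N :=
    fun x hx => QuotientGroup.mk (Units.mk0 (v x) (vne x hx)) with hcls
  have cls_eq_iff : ∀ (x x' : K) (hx : x ≠ 0) (hx' : x' ≠ 0),
      cls x hx = cls x' hx' ↔ ∃ c : K, c ≠ 0 ∧ v x = v x' * (v c) ^ d := by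
    intro x x' hx hx'
    rw [hcls]
    simp only []
    rw [QuotientGroup.eq]
    constructor
    · rintro ⟨ε, hε⟩
      rw [powMonoidHom_apply] at hε
      obtain ⟨c, hc⟩ := val_surjective R ((ε⁻¹ : Γ₀ˣ) : Γ₀)
      have hcne : c ≠ 0 := by
        intro h0
        rw [h0, Valuation.map_zero] at hc
        exact Units.ne_zero (ε⁻¹) hc.symm
      refine ⟨c, hcne, ?_⟩
      have hunit : Units.mk0 (v x) (vne x hx) = Units.mk0 (v x') (vne x' hx') * (ε⁻¹) ^ d := by
        rw [inv_pow, hε]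
        group
      have := congrArg (Units.val) hunit
      simpa [hc] using this
    · rintro ⟨c, hcne, heq⟩
      refine ⟨(Units.mk0 (v c) (vne c hcne))⁻¹, ?_⟩
      rw [powMonoidHom_apply]
      have hunit : Units.mk0 (v x) (vne x hx)
          = Units.mk0 (v x') (vne x' hx') * (Units.mk0 (v c) (vne c hcne)) ^ d := by
        apply Units.ext
        simpa using heq
      rw [hunit]
      group
  -- the quotient is nonempty
  have one_le_cardQ : (1 : ℕ∞) ≤ ENat.card (Γ₀ˣ ⧸ N) := by
    rw [ENat.one_le_iff_ne_zero]
    intro h0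
    rw [ENat.card_eq_zero_iff_empty] at h0
    exact h0.elim (1 : Γ₀ˣ ⧸ N)
  have one_le_uk : (1 : ℕ∞) ≤ uDiag d k := le_uDiag (anisoDim_one hd)
  -- upper bound
  have upper : uDiag d (FractionRing R) ≤ ENat.card (Γ₀ˣ ⧸ N) * uDiag d k := by
    rw [uDiag_eq]
    refine iSup₂_le fun n han => ?_
    by_cases hQtop : ENat.card (Γ₀ˣ ⧸ N) = ⊤
    · rw [hQtop, ENat.top_mul (by intro h0; rw [h0] at one_le_uk; simp at one_le_uk)]
      exact le_top
    by_cases hktop : uDiag d k = ⊤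
    · rw [hktop, ENat.mul_top (by intro h0; rw [h0] at one_le_cardQ; simp at one_le_cardQ)]
      exact le_top
    have hfinQ : Finite (Γ₀ˣ ⧸ N) := by
      by_contra hinf
      exact hQtop (@ENat.card_eq_top_of_infinite _ (not_finite_iff_infinite.mp hinf))
    have : Fintype (Γ₀ˣ ⧸ N) := Fintype.ofFinite _
    obtain ⟨a, ha, hani⟩ := han
    lift uDiag d k to ℕ using hktop with M hM
    set f : Fin n → Γ₀ˣ ⧸ N := fun i => cls (a i) (ha i) with hf
    have hfib : ∀ q : Γ₀ˣ ⧸ N, (Finset.univ.filter (fun i => f i = q)).card ≤ M := by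
      intro q
      set s := Finset.univ.filter (fun i => f i = q) with hsdef
      set emb : Fin s.card ↪ Fin n := (s.orderEmbOfFin rfl).toEmbedding with hembdef
      have hmem : ∀ j, emb j ∈ s := fun j => Finset.orderEmbOfFin_mem s rfl j
      have hfq : ∀ j, f (emb j) = q := fun j => (Finset.mem_filter.mp (hmem j)).2
      have hclass : ∀ j j' : Fin s.card, ∃ c : K, c ≠ 0 ∧
          v ((a ∘ emb) j) = v ((a ∘ emb) j') * (v c) ^ d := by
        intro j j'
        exact (cls_eq_iff (a (emb j)) (a (emb j')) (ha _) (ha _)).mp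
          ((hfq j).trans (hfq j').symm)
      have hAD : AnisoDim k d s.card :=
        anisoDim_residue_of_same_class R hd hdk (a ∘ emb) (fun j => ha _) hclass
          (not_isotropic_comp hd a emb hani)
      have := le_uDiag hAD
      rw [← hM, Nat.cast_le] at this
      exact this
    have hn : n ≤ Fintype.card (Γ₀ˣ ⧸ N) * M := by
      have hcount : n = ∑ q : Γ₀ˣ ⧸ N, (Finset.univ.filter (fun i => f i = q)).card := by
        rw [← Finset.card_eq_sum_card_fiberwise (fun i _ => Finset.mem_univ (f i)),
          Finset.card_univ, Fintype.card_fin]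
      rw [hcount]
      calc ∑ q : Γ₀ˣ ⧸ N, (Finset.univ.filter (fun i => f i = q)).card
          ≤ ∑ _q : Γ₀ˣ ⧸ N, M := Finset.sum_le_sum fun q _ => hfib q
        _ = Fintype.card (Γ₀ˣ ⧸ N) * M := by
            rw [Finset.sum_const, Finset.card_univ, smul_eq_mul]
    rw [ENat.card_eq_coe_fintype_card, ← Nat.cast_mul, Nat.cast_le]
    exact hn
  -- construction (lower bound ingredient)
  have key : ∀ r' M : ℕ, (r' : ℕ∞) ≤ ENat.card (Γ₀ˣ ⧸ N) → AnisoDim k d M →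
      AnisoDim (FractionRing R) d (r' * M) := by
    intro r' M hr' hMani
    obtain ⟨G, hG⟩ : ∃ G : Fin r' → Γ₀ˣ ⧸ N, Function.Injective G := by
      by_cases hfin : Finite (Γ₀ˣ ⧸ N)
      · have : Fintype (Γ₀ˣ ⧸ N) := Fintype.ofFinite _
        rw [ENat.card_eq_coe_fintype_card, Nat.cast_le] at hr'
        obtain ⟨e⟩ := Function.Embedding.nonempty_of_card_le
          (by simpa using hr' : Fintype.card (Fin r') ≤ Fintype.card (Γ₀ˣ ⧸ N))
        exact ⟨e, e.injective⟩
      · have : Infinite (Γ₀ˣ ⧸ N) := not_finite_iff_infinite.mp hfin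
        exact ⟨_, ((Fin.valEmbedding).trans (Infinite.natEmbedding _)).injective⟩
    obtain ⟨wc, hw0, hwani⟩ := hMani
    obtain ⟨U, hUres⟩ : ∃ U : Fin M → R, ∀ i, res (U i) = wc i :=
      ⟨fun i => (IsLocalRing.residue_surjective (wc i)).choose,
       fun i => (IsLocalRing.residue_surjective (wc i)).choose_spec⟩
    have hUu : ∀ i, IsUnit (U i) := fun i =>
      (IsLocalRing.residue_ne_zero_iff_isUnit _).mp (by rw [hUres]; exact hw0 i)
    have hrep : ∀ j : Fin r', ∃ x : K, ∃ hx : x ≠ 0, cls x hx = G j := by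
      intro j
      obtain ⟨γ, hγ⟩ := QuotientGroup.mk_surjective (G j)
      obtain ⟨x, hx⟩ := val_surjective R ((γ : Γ₀ˣ) : Γ₀)
      have hxne : x ≠ 0 := by
        intro h0
        rw [h0, Valuation.map_zero] at hx
        exact Units.ne_zero γ hx.symm
      refine ⟨x, hxne, ?_⟩
      rw [hcls]
      simp only []
      have : Units.mk0 (v x) (vne x hxne) = γ := Units.ext (by rw [Units.val_mk0, hx])
      rw [this, hγ]
    choose b hbne hbcls using hrep
    have hclass : ∀ j j' : Fin r', ∀ c : K, c ≠ 0 →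
        v (b j) = v (b j') * (v c) ^ d → j = j' := by
      intro j j' c hc heq
      apply hG
      rw [← hbcls j, ← hbcls j']
      exact (cls_eq_iff (b j) (b j') (hbne j) (hbne j')).mpr ⟨c, hc, heq⟩
    have hanisoP : ¬ IsotropicDiag (FractionRing R) d
        (fun p : Fin r' × Fin M => b p.1 * algebraMap R (FractionRing R) (U p.2)) := by
      intro hiso
      obtain ⟨j, y, hy, hysum⟩ :=
        descend_isotropic R hd b hbne hclass (fun _ i => U i) (fun _ i => hUu i) hiso
      refine hwani ⟨y, hy, ?_⟩
      rw [← hysum]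
      exact Finset.sum_congr rfl fun i _ => by rw [hUres]
    refine ⟨(fun p : Fin r' × Fin M => b p.1 * algebraMap R (FractionRing R) (U p.2)) ∘
      (finProdFinEquiv.symm : Fin (r' * M) → Fin r' × Fin M), fun i => ?_, ?_⟩
    · exact mul_ne_zero (hbne _)
        ((map_ne_zero_iff _ (IsFractionRing.injective R (FractionRing R))).mpr (hUu _).ne_zero)
    · exact not_isotropic_comp hd _ (finProdFinEquiv.symm.toEmbedding) hanisoP
  -- conclude
  refine le_antisymm upper ?_
  by_cases hQ : ENat.card (Γ₀ˣ ⧸ N) = ⊤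
  · have htop : uDiag d (FractionRing R) = ⊤ := by
      apply uDiag_eq_top_of_forall
      intro n
      have := key n 1 (hQ ▸ le_top) (anisoDim_one hd)
      rwa [mul_one] at this
    rw [htop]
    exact le_top
  by_cases hk : uDiag d k = ⊤
  · have htop : uDiag d (FractionRing R) = ⊤ := by
      apply uDiag_eq_top_of_forall
      intro n
      have := key 1 n one_le_cardQ (anisoDim_of_le hd (hk ▸ le_top))
      rwa [one_mul] at this
    rw [htop]
    exact le_top
  · have hfinQ : Finite (Γ₀ˣ ⧸ N) := by
      by_contra hinf
      exact hQ (@ENat.card_eq_top_of_infinite _ (not_finite_iff_infinite.mp hinf))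
    have : Fintype (Γ₀ˣ ⧸ N) := Fintype.ofFinite _
    lift uDiag d k to ℕ using hk with M hM
    have hcard : ENat.card (Γ₀ˣ ⧸ N) = (Fintype.card (Γ₀ˣ ⧸ N) : ℕ∞) :=
      ENat.card_eq_coe_fintype_card
    have hAD := key (Fintype.card (Γ₀ˣ ⧸ N)) M (le_of_eq hcard.symm) (anisoDim_of_le hd hM.le)
    have hfin := le_uDiag hAD
    rw [hcard, ← Nat.cast_mul]
    exact hfin


end Val
end UDiagAux

/-- **Let `(K,v)` be a Henselian valued field** (given by its valuation ring `R`, Henselian,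
with `K = Frac R`) **with value group `Γ` and residue field `k` of characteristic not dividing
`d!`.  Then `u_diag(d,K) = |Γ/dΓ| · u_diag(d,k)`, the equality being in `ℕ∞` so that it also
holds when the values are infinite.**  Here the value group `Γ` (written multiplicatively) is
the unit group of `ValuationRing.ValueGroup R K`, and `dΓ` is its subgroup of `d`-th powers. -/
theorem uDiag_henselian (R : Type*) [CommRing R] [IsDomain R] [ValuationRing R]
    [HenselianLocalRing R] (d : ℕ) (hd : 1 ≤ d)
    (hchar : (d.factorial : IsLocalRing.ResidueField R) ≠ 0) :
    uDiag d (FractionRing R) =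
      ENat.card ((ValuationRing.ValueGroup R (FractionRing R))ˣ ⧸
          (powMonoidHom d : (ValuationRing.ValueGroup R (FractionRing R))ˣ →*
            (ValuationRing.ValueGroup R (FractionRing R))ˣ).range) *
        uDiag d (IsLocalRing.ResidueField R) :=
  UDiagAux.main R d hd hchar
end

section
/- Let (K,v) be a complete discretely valued field with residue field k of characteristic not dividing d!. If every diagonal form of degree d and dimension n+1 over k is isotropic, then every diagonal form of degree d and dimension dn+1 over K is isotropic. -/
open IsLocalRing Polynomial

lemma units_case
    (A : Type*) [CommRing A] [IsLocalRing A]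
    [IsAdicComplete (IsLocalRing.maximalIdeal A) A]
    (d : ℕ) (hd : 1 ≤ d) (hdk : ((d : ℕ) : ResidueField A) ≠ 0)
    (n : ℕ)
    (hk : ∀ a : Fin (n + 1) → ResidueField A, (∀ i, a i ≠ 0) →
      ∃ x : Fin (n + 1) → ResidueField A, x ≠ 0 ∧ ∑ i, a i * x i ^ d = 0)
    (u : Fin (n + 1) → Aˣ) :
    ∃ x : Fin (n + 1) → A, (∃ i, IsUnit (x i)) ∧ ∑ i, (u i : A) * x i ^ d = 0 := by
  classical
  have hres : ∀ a : A, residue A a ≠ 0 → IsUnit a := by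
    intro a ha
    by_contra h
    exact ha (Ideal.Quotient.eq_zero_iff_mem.mpr h)
  obtain ⟨xb, hxb0, hxbsum⟩ := hk (fun i => residue A (u i))
    (fun i => ((u i).isUnit.map (residue A)).ne_zero)
  obtain ⟨i₀, hi₀⟩ : ∃ i, xb i ≠ 0 := Function.ne_iff.mp hxb0
  choose y hy using fun j => Ideal.Quotient.mk_surjective (I := maximalIdeal A) (xb j)
  have hy : ∀ j, residue A (y j) = xb j := hy
  set s : A := (↑(u i₀)⁻¹ : A) * ∑ j ∈ Finset.univ.erase i₀, (u j : A) * y j ^ d with hs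
  set f : A[X] := X ^ d + C s with hf
  have hmonic : f.Monic := monic_X_pow_add_C s (by omega)
  have hderiv : f.derivative = C (d : A) * X ^ (d - 1) := by
    simp [hf, derivative_X_pow]
  -- residue computations
  have hresinv : residue A (↑(u i₀)⁻¹ : A) * residue A (u i₀) = 1 := by
    rw [← map_mul, Units.inv_mul, map_one]
  have hsum' : ∑ j ∈ Finset.univ.erase i₀, residue A (u j) * xb j ^ d
      = - (residue A (u i₀) * xb i₀ ^ d) := by
    have := Finset.add_sum_erase Finset.univ
      (fun j => residue A (u j) * xb j ^ d) (Finset.mem_univ i₀)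
    rw [hxbsum] at this
    linear_combination this
  have hressum : residue A s
      = residue A (↑(u i₀)⁻¹ : A) * ∑ j ∈ Finset.univ.erase i₀, residue A (u j) * xb j ^ d := by
    rw [hs, map_mul, map_sum]
    refine congrArg _ (Finset.sum_congr rfl fun j _ => ?_)
    rw [map_mul, map_pow, hy]
  have hfeval : f.eval (y i₀) ∈ maximalIdeal A := by
    have e1 : f.eval (y i₀) = y i₀ ^ d + s := by simp [hf]
    have : residue A (f.eval (y i₀)) = 0 := by
      rw [e1, map_add, map_pow, hy, hressum, hsum']
      linear_combination (-(xb i₀ ^ d)) * hresinv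
    exact Ideal.Quotient.eq_zero_iff_mem.mp this
  have hderivunit : IsUnit (Ideal.Quotient.mk (maximalIdeal A) (f.derivative.eval (y i₀))) := by
    have e3 : residue A (f.derivative.eval (y i₀))
        = (d : ResidueField A) * xb i₀ ^ (d - 1) := by
      rw [hderiv]
      simp only [eval_mul, eval_pow, eval_X, eval_C, eval_natCast, map_mul, map_pow, hy, map_natCast]
    have hne : residue A (f.derivative.eval (y i₀)) ≠ 0 := by
      rw [e3]; exact mul_ne_zero hdk (pow_ne_zero _ hi₀)
    exact (isUnit_iff_ne_zero.mpr hne : IsUnit (residue A (f.derivative.eval (y i₀))))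
  obtain ⟨a, hroot, hamem⟩ := HenselianRing.is_henselian (I := maximalIdeal A)
    f hmonic (y i₀) hfeval hderivunit
  have haunit : IsUnit a := by
    refine hres a ?_
    have : residue A a = residue A (y i₀) := by
      rw [← sub_eq_zero, ← map_sub]
      exact Ideal.Quotient.eq_zero_iff_mem.mpr hamem
    rw [this, hy]; exact hi₀
  have haeq : a ^ d + s = 0 := by
    have := hroot
    simpa [hf, Polynomial.IsRoot, eval_add, eval_pow, eval_X, eval_C] using this
  refine ⟨Function.update y i₀ a, ⟨i₀, by simp [haunit]⟩, ?_⟩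
  rw [← Finset.add_sum_erase Finset.univ _ (Finset.mem_univ i₀)]
  have h1 : Function.update y i₀ a i₀ = a := by simp
  have h2 : ∀ j ∈ Finset.univ.erase i₀, (u j : A) * Function.update y i₀ a j ^ d
      = (u j : A) * y j ^ d := by
    intro j hj
    rw [Function.update_of_ne (Finset.mem_erase.mp hj).1]
  rw [h1, Finset.sum_congr rfl h2]
  have : ∑ j ∈ Finset.univ.erase i₀, (u j : A) * y j ^ d = (u i₀ : A) * s := by
    rw [hs, ← mul_assoc, Units.mul_inv, one_mul]
  rw [this]
  calc (u i₀ : A) * a ^ d + (u i₀ : A) * s = (u i₀ : A) * (a ^ d + s) := by ring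
  _ = 0 := by rw [haeq, mul_zero]


lemma rep_lemma
    (A : Type*) [CommRing A] [IsDomain A] [IsDiscreteValuationRing A]
    {π : A} (hπ : Irreducible π) (b : FractionRing A) (hb : b ≠ 0) :
    ∃ (u : Aˣ) (z : ℤ),
      b = algebraMap A (FractionRing A) u * (algebraMap A (FractionRing A) π) ^ z := by
  set φ := algebraMap A (FractionRing A) with hφ
  have hinj : Function.Injective φ := IsFractionRing.injective A (FractionRing A)
  have hπK : φ π ≠ 0 := fun h => hπ.ne_zero (hinj (by rw [h, map_zero]))
  obtain ⟨x, y, hy, hxy⟩ := IsFractionRing.div_surjective (A := A) b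
  have hy0 : y ≠ 0 := nonZeroDivisors.ne_zero hy
  have hx0 : x ≠ 0 := by
    rintro rfl
    rw [map_zero, zero_div] at hxy
    exact hb hxy.symm
  obtain ⟨m, u₁, hu₁⟩ := IsDiscreteValuationRing.eq_unit_mul_pow_irreducible hx0 hπ
  obtain ⟨l, u₂, hu₂⟩ := IsDiscreteValuationRing.eq_unit_mul_pow_irreducible hy0 hπ
  refine ⟨u₁ * u₂⁻¹, (m : ℤ) - l, ?_⟩
  have hyK : φ y ≠ 0 := fun h => hy0 (hinj (by rw [h, map_zero]))
  have hinv : φ (↑u₂⁻¹ : A) * φ (u₂ : A) = 1 := by rw [← map_mul, Units.inv_mul, map_one]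
  have hx : φ x = φ (u₁ : A) * φ π ^ m := by rw [hu₁, map_mul, map_pow]
  have hyy : φ y = φ (u₂ : A) * φ π ^ l := by rw [hu₂, map_mul, map_pow]
  have hπl : φ π ^ l ≠ 0 := pow_ne_zero _ hπK
  have hπinv : (φ π ^ l)⁻¹ * φ π ^ l = 1 := inv_mul_cancel₀ hπl
  rw [← hxy, div_eq_iff hyK, Units.val_mul, map_mul, zpow_sub₀ hπK, zpow_natCast,
    zpow_natCast, div_eq_mul_inv, hx, hyy]
  linear_combination (-(φ (u₁ : A) * φ π ^ m * ((φ π ^ l)⁻¹ * φ π ^ l))) * hinv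
    + (-(φ (u₁ : A) * φ π ^ m)) * hπinv

theorem springer_isotropy_step'
    (A : Type*) [CommRing A] [IsDomain A] [IsDiscreteValuationRing A]
    [IsAdicComplete (IsLocalRing.maximalIdeal A) A]
    (d : ℕ) (hd : 1 ≤ d) (hchar : (d.factorial : IsLocalRing.ResidueField A) ≠ 0)
    (n : ℕ)
    (hk : ∀ a : Fin (n + 1) → IsLocalRing.ResidueField A, (∀ i, a i ≠ 0) →
      ∃ x : Fin (n + 1) → IsLocalRing.ResidueField A, x ≠ 0 ∧ ∑ i, a i * x i ^ d = 0) :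
    ∀ b : Fin (d * n + 1) → FractionRing A, (∀ i, b i ≠ 0) →
      ∃ x : Fin (d * n + 1) → FractionRing A, x ≠ 0 ∧ ∑ i, b i * x i ^ d = 0 := by
  classical
  intro b hb
  set φ := algebraMap A (FractionRing A) with hφ
  have hinj : Function.Injective φ := IsFractionRing.injective A (FractionRing A)
  -- d ≠ 0 in the residue field
  have hdk : ((d : ℕ) : ResidueField A) ≠ 0 := by
    intro h
    apply hchar
    obtain ⟨e, rfl⟩ : ∃ e, d = e + 1 := ⟨d - 1, by omega⟩
    rw [Nat.factorial_succ, Nat.cast_mul, h, zero_mul]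
  obtain ⟨π, hπ⟩ := IsDiscreteValuationRing.exists_irreducible A
  have hπK : φ π ≠ 0 := fun h => hπ.ne_zero (hinj (by rw [h, map_zero]))
  choose u z hbz using fun i => rep_lemma A hπ (b i) (hb i)
  -- pigeonhole on valuations mod d
  haveI : NeZero d := ⟨by omega⟩
  obtain ⟨c, -, hc⟩ := Finset.exists_lt_card_fiber_of_mul_lt_card_of_maps_to
    (f := fun i => ((z i : ZMod d))) (t := Finset.univ) (n := n)
    (fun a _ => Finset.mem_univ _)
    (by rw [Finset.card_univ, Finset.card_univ, ZMod.card, Fintype.card_fin]; omega)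
  obtain ⟨T, hTS, hT⟩ := Finset.exists_subset_card_eq (show n + 1 ≤ _ from hc)
  set g : Fin (n + 1) → Fin (d * n + 1) := fun j => (T.orderIsoOfFin hT j : Fin (d * n + 1))
    with hg
  have hginj : Function.Injective g := fun a b h => by
    simpa using (T.orderIsoOfFin hT).injective (Subtype.ext h)
  have hgmem : ∀ j, ((z (g j) : ZMod d)) = c := by
    intro j
    have := hTS (T.orderIsoOfFin hT j).2
    exact (Finset.mem_filter.mp this).2
  have hdvd : ∀ j, (d : ℤ) ∣ z (g j) - z (g 0) := by
    intro j
    have : ((z (g j) : ZMod d)) = ((z (g 0) : ZMod d)) := by rw [hgmem, hgmem]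
    exact ((ZMod.intCast_eq_intCast_iff _ _ _).mp this).symm.dvd
  set q : Fin (n + 1) → ℤ := fun j => (z (g j) - z (g 0)) / d with hqdef
  have hq : ∀ j, z (g j) = d * q j + z (g 0) := by
    intro j
    linarith [Int.ediv_mul_cancel (hdvd j), mul_comm ((z (g j) - z (g 0)) / (d : ℤ)) (d : ℤ)]
  -- solve the unit-coefficient form over A
  obtain ⟨x', ⟨j₀, hj₀⟩, hsum⟩ := units_case A d hd hdk n hk (fun j => u (g j))
  set x : Fin (d * n + 1) → FractionRing A :=
    Function.extend g (fun j => φ π ^ (-q j) * φ (x' j)) 0 with hx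
  have hxg : ∀ j, x (g j) = φ π ^ (-q j) * φ (x' j) := fun j => hginj.extend_apply _ _ _
  have hxj₀ : x (g j₀) ≠ 0 := by
    rw [hxg]
    exact mul_ne_zero (zpow_ne_zero _ hπK)
      (fun h => (hj₀.map φ).ne_zero h)
  refine ⟨x, Function.ne_iff.mpr ⟨g j₀, by simpa using hxj₀⟩, ?_⟩
  have hterm : ∀ j, b (g j) * x (g j) ^ d
      = φ π ^ (z (g 0)) * φ ((u (g j) : A) * x' j ^ d) := by
    intro j
    have e : φ π ^ ((d : ℤ) * q j + z (g 0)) * φ π ^ (-q j * (d : ℤ)) = φ π ^ (z (g 0)) := by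
      rw [← zpow_add₀ hπK]
      congr 1
      ring
    rw [hbz (g j), hxg j, mul_pow, ← zpow_natCast (φ π ^ (-q j)), ← zpow_mul,
      map_mul, map_pow, hq j]
    linear_combination (φ (u (g j) : A) * φ (x' j) ^ d) * e
  have hvanish : ∀ i ∈ Finset.univ \ Finset.univ.image g, b i * x i ^ d = 0 := by
    intro i hi
    have hnot : ¬∃ j, g j = i := by
      rintro ⟨j, rfl⟩
      exact (Finset.mem_sdiff.mp hi).2 (Finset.mem_image_of_mem g (Finset.mem_univ j))
    have : x i = 0 := by rw [hx, Function.extend_apply' _ _ _ hnot]; rfl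
    rw [this, zero_pow (by omega), mul_zero]
  calc ∑ i, b i * x i ^ d = ∑ i ∈ Finset.univ.image g, b i * x i ^ d := by
        refine (Finset.sum_subset (Finset.subset_univ _) ?_).symm
        intro i _ hi
        exact hvanish i (Finset.mem_sdiff.mpr ⟨Finset.mem_univ i, hi⟩)
    _ = ∑ j, b (g j) * x (g j) ^ d := Finset.sum_image fun a _ c _ h => hginj h
    _ = ∑ j, φ π ^ (z (g 0)) * φ ((u (g j) : A) * x' j ^ d) :=
        Finset.sum_congr rfl fun j _ => hterm j
    _ = φ π ^ (z (g 0)) * φ (∑ j, (u (g j) : A) * x' j ^ d) := by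
        rw [← Finset.mul_sum, map_sum]
    _ = 0 := by rw [hsum, map_zero, mul_zero]

/-- **Let `(K,v)` be a complete discretely valued field** (formalized as the fraction field of
a complete discrete valuation ring `A`) **with residue field `k` of characteristic not dividing
`d!`.  If every diagonal form of degree `d` and dimension `n+1` over `k` is isotropic, then
every diagonal form of degree `d` and dimension `dn+1` over `K` is isotropic.** -/
theorem springer_isotropy_step
    (A : Type*) [CommRing A] [IsDomain A] [IsDiscreteValuationRing A]
    [IsAdicComplete (IsLocalRing.maximalIdeal A) A]
    (d : ℕ) (hd : 1 ≤ d) (hchar : (d.factorial : IsLocalRing.ResidueField A) ≠ 0)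
    (n : ℕ)
    (hk : ∀ a : Fin (n + 1) → IsLocalRing.ResidueField A, (∀ i, a i ≠ 0) →
      IsotropicDiag (IsLocalRing.ResidueField A) d a) :
    ∀ b : Fin (d * n + 1) → FractionRing A, (∀ i, b i ≠ 0) →
      IsotropicDiag (FractionRing A) d b := by
  intro b hb
  exact springer_isotropy_step' A d hd hchar n hk b hb
end

section
/- Let (K,v) be a complete discretely valued field with residue field k of characteristic not dividing d!. If k has an anisotropic diagonal form of degree d and dimension n, then K has an anisotropic diagonal form of degree d and dimension dn. -/
section Aux

variable {A : Type*} [CommRing A] [IsDomain A] [IsDiscreteValuationRing A]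

/-- If the residues of `a` form an anisotropic diagonal form and some `y i` is a unit,
then `∑ a i * y i ^ d` is a unit. -/
lemma aux_unit_sum (d : ℕ) {n : ℕ} (a : Fin n → A)
    (han : ¬ IsotropicDiag (IsLocalRing.ResidueField A) d
      (fun i => IsLocalRing.residue A (a i)))
    (y : Fin n → A) (hy : ∃ i, IsUnit (y i)) : IsUnit (∑ i, a i * y i ^ d) := by
  by_contra hS
  apply han
  refine ⟨fun i => IsLocalRing.residue A (y i), ?_, ?_⟩
  · obtain ⟨i, hi⟩ := hy
    intro h0
    have h1 : IsLocalRing.residue A (y i) = 0 := congrFun h0 i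
    have h2 : y i ∈ IsLocalRing.maximalIdeal A := Ideal.Quotient.eq_zero_iff_mem.mp h1
    exact (IsLocalRing.mem_maximalIdeal _).mp h2 hi
  · have h2 : (∑ i, a i * y i ^ d) ∈ IsLocalRing.maximalIdeal A :=
      (IsLocalRing.mem_maximalIdeal _).mpr hS
    have h3 : IsLocalRing.residue A (∑ i, a i * y i ^ d) = 0 :=
      Ideal.Quotient.eq_zero_iff_mem.mpr h2
    rw [map_sum] at h3
    simpa only [map_mul, map_pow] using h3

/-- Normalization: any nonzero tuple over a DVR is `π ^ m` times a tuple with a unit entry. -/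
lemma aux_normalize {N : ℕ} {π : A} (hπ : Irreducible π) (y : Fin N → A) (hy : y ≠ 0) :
    ∃ (m : ℕ) (z : Fin N → A), (∀ c, y c = π ^ m * z c) ∧ ∃ c, IsUnit (z c) := by
  classical
  obtain ⟨c1, hc1⟩ := Function.ne_iff.mp hy
  have hne : (Finset.univ : Finset (Fin N)).Nonempty := ⟨c1, Finset.mem_univ c1⟩
  obtain ⟨c0, _, hc0⟩ := Finset.exists_min_image Finset.univ
    (fun c => IsDiscreteValuationRing.addVal A (y c)) hne
  have hc0ne : IsDiscreteValuationRing.addVal A (y c0) ≠ ⊤ := by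
    intro h
    have := hc0 c1 (Finset.mem_univ c1)
    rw [h, top_le_iff] at this
    exact hc1 (IsDiscreteValuationRing.addVal_eq_top_iff.mp this)
  lift IsDiscreteValuationRing.addVal A (y c0) to ℕ using hc0ne with m hm
  have hdvd : ∀ c, π ^ m ∣ y c := by
    intro c
    rw [← IsDiscreteValuationRing.addVal_le_iff_dvd, Irreducible.addVal_pow hπ]
    exact hc0 c (Finset.mem_univ c)
  choose z hz using hdvd
  refine ⟨m, z, hz, c0, ?_⟩
  by_contra hu
  have hmem : z c0 ∈ IsLocalRing.maximalIdeal A := (IsLocalRing.mem_maximalIdeal _).mpr hu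
  rw [Irreducible.maximalIdeal_eq hπ, Ideal.mem_span_singleton] at hmem
  obtain ⟨w, hw⟩ := hmem
  have : π ^ (m + 1) ∣ y c0 := ⟨w, by rw [hz c0, hw, pow_succ]; ring⟩
  rw [← IsDiscreteValuationRing.addVal_le_iff_dvd, Irreducible.addVal_pow hπ, ← hm] at this
  have h2 : (m + 1 : ℕ) ≤ m := by exact_mod_cast this
  omega

end Aux

/-- **Let `(K,v)` be a complete discretely valued field** (the fraction field of a complete
discrete valuation ring `A`) **with residue field `k` of characteristic not dividing `d!`.
If `k` has an anisotropic diagonal form of degree `d` and dimension `n`, then `K` has an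
anisotropic diagonal form of degree `d` and dimension `dn`.** -/
theorem anisotropic_lift
    (A : Type*) [CommRing A] [IsDomain A] [IsDiscreteValuationRing A]
    [IsAdicComplete (IsLocalRing.maximalIdeal A) A]
    (d : ℕ) (hd : 1 ≤ d) (hchar : (d.factorial : IsLocalRing.ResidueField A) ≠ 0)
    (n : ℕ)
    (hk : ∃ a : Fin n → IsLocalRing.ResidueField A, (∀ i, a i ≠ 0) ∧
      ¬ IsotropicDiag (IsLocalRing.ResidueField A) d a) :
    ∃ b : Fin (d * n) → FractionRing A, (∀ i, b i ≠ 0) ∧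
      ¬ IsotropicDiag (FractionRing A) d b := by
  classical
  obtain ⟨abar, habar0, habarn⟩ := hk
  choose a ha using fun i => IsLocalRing.residue_surjective (R := A) (abar i)
  have hresan : ¬ IsotropicDiag (IsLocalRing.ResidueField A) d
      (fun i => IsLocalRing.residue A (a i)) := by
    have : (fun i => IsLocalRing.residue A (a i)) = abar := funext ha
    rw [this]; exact habarn
  have ha0 : ∀ i, a i ≠ 0 := by
    intro i h
    apply habar0 i
    rw [← ha i, h, map_zero]
  obtain ⟨π, hπ⟩ := IsDiscreteValuationRing.exists_irreducible A
  set e := (finProdFinEquiv : Fin d × Fin n ≃ Fin (d * n)) with he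
  set K := FractionRing A with hK
  have hinj : Function.Injective (algebraMap A K) := IsFractionRing.injective A K
  refine ⟨fun c => algebraMap A K (π ^ ((e.symm c).1 : ℕ) * a (e.symm c).2), ?_, ?_⟩
  · intro c h
    have h0 : π ^ ((e.symm c).1 : ℕ) * a (e.symm c).2 = 0 := by
      apply hinj; simpa only [map_zero] using h
    rcases mul_eq_zero.mp h0 with h1 | h1
    · exact pow_ne_zero _ hπ.ne_zero h1
    · exact ha0 _ h1
  · rintro ⟨x, hx0, hxe⟩
    -- clear denominators
    obtain ⟨t0, ht0⟩ := IsLocalization.exist_integer_multiples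
      (nonZeroDivisors A) Finset.univ x
    choose y hy using fun c => ht0 c (Finset.mem_univ c)
    have ht0K : algebraMap A K (t0 : A) ≠ 0 := by
      intro h
      exact nonZeroDivisors.coe_ne_zero t0 (hinj (by rw [h, map_zero]))
    have hy0 : y ≠ 0 := by
      obtain ⟨c, hc⟩ := Function.ne_iff.mp hx0
      refine Function.ne_iff.mpr ⟨c, ?_⟩
      rw [Pi.zero_apply] at hc ⊢
      intro h
      have := hy c
      rw [h, map_zero, Algebra.smul_def] at this
      exact hc (by
        rcases mul_eq_zero.mp this.symm with h1 | h1
        · exact absurd h1 ht0K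
        · exact h1)
    -- the equation over A
    have hA : ∑ c, π ^ ((e.symm c).1 : ℕ) * a (e.symm c).2 * y c ^ d = 0 := by
      apply hinj
      rw [map_sum, map_zero]
      have : ∀ c, algebraMap A K (π ^ ((e.symm c).1 : ℕ) * a (e.symm c).2 * y c ^ d)
          = algebraMap A K (t0 : A) ^ d *
            (algebraMap A K (π ^ ((e.symm c).1 : ℕ) * a (e.symm c).2) * x c ^ d) := by
        intro c
        rw [map_mul, map_pow, hy c, Algebra.smul_def, mul_pow]
        ring
      rw [Finset.sum_congr rfl (fun c _ => this c), ← Finset.mul_sum, hxe, mul_zero]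
    -- normalize y
    obtain ⟨m, z, hz, cu, hcu⟩ := aux_normalize hπ y hy0
    have hAz : ∑ c, π ^ ((e.symm c).1 : ℕ) * a (e.symm c).2 * z c ^ d = 0 := by
      have hfac : ∀ c, π ^ ((e.symm c).1 : ℕ) * a (e.symm c).2 * y c ^ d
          = π ^ (d * m) * (π ^ ((e.symm c).1 : ℕ) * a (e.symm c).2 * z c ^ d) := by
        intro c
        rw [hz c, mul_pow, ← pow_mul, Nat.mul_comm m d]
        ring
      rw [Finset.sum_congr rfl (fun c _ => hfac c), ← Finset.mul_sum] at hA
      rcases mul_eq_zero.mp hA with h1 | h1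
      · exact absurd h1 (pow_ne_zero _ hπ.ne_zero)
      · exact h1
    -- repackage as a sum over Fin d
    set S : Fin d → A := fun j => ∑ i, a i * z (e (j, i)) ^ d with hS
    have hSsum : ∑ j : Fin d, π ^ (j : ℕ) * S j = 0 := by
      rw [← hAz, ← Equiv.sum_comp e
        (fun c => π ^ ((e.symm c).1 : ℕ) * a (e.symm c).2 * z c ^ d)]
      rw [Fintype.sum_prod_type]
      refine Finset.sum_congr rfl fun j _ => ?_
      rw [hS, Finset.mul_sum]
      refine Finset.sum_congr rfl fun i _ => ?_
      rw [Equiv.symm_apply_apply]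
      ring
    -- key induction: every entry of z is divisible by π
    have key : ∀ jn : ℕ, ∀ hj : jn < d, ∀ i, π ∣ z (e (⟨jn, hj⟩, i)) := by
      intro jn
      induction jn using Nat.strong_induction_on with
      | _ jn IH =>
        intro hj i
        have hrest : π ^ jn * S ⟨jn, hj⟩
            + ∑ j' ∈ Finset.univ.erase (⟨jn, hj⟩ : Fin d), π ^ (j' : ℕ) * S j' = 0 := by
          have h0 := hSsum
          rw [← Finset.add_sum_erase _ (fun j' : Fin d => π ^ (j' : ℕ) * S j')
            (Finset.mem_univ (⟨jn, hj⟩ : Fin d))] at h0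
          exact h0
        have hdvdS : π ^ (jn + 1) ∣ π ^ jn * S ⟨jn, hj⟩ := by
          rw [eq_neg_of_add_eq_zero_left hrest, dvd_neg]
          refine Finset.dvd_sum fun j' hj' => ?_
          have hne : (j' : ℕ) ≠ jn := by
            intro h
            exact Finset.ne_of_mem_erase hj' (Fin.ext h)
          rcases lt_or_gt_of_ne hne with hlt | hgt
          · -- j' < jn : use IH to get π ^ d ∣ S j'
            have hdS : π ^ d ∣ S j' := by
              refine Finset.dvd_sum fun i' _ => ?_
              have hdz : π ∣ z (e (j', i')) := by
                have := IH (j' : ℕ) hlt j'.isLt i'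
                simpa using this
              obtain ⟨w, hw⟩ := hdz
              exact Dvd.dvd.mul_left ⟨w ^ d, by rw [hw, mul_pow]⟩ _
            calc π ^ (jn + 1) ∣ π ^ ((j' : ℕ) + d) := pow_dvd_pow _ (by omega)
              _ ∣ π ^ (j' : ℕ) * S j' := by
                  rw [pow_add]; exact mul_dvd_mul_left _ hdS
          · calc π ^ (jn + 1) ∣ π ^ (j' : ℕ) := pow_dvd_pow _ (by omega)
              _ ∣ π ^ (j' : ℕ) * S j' := dvd_mul_right _ _
        have hdS : π ∣ S ⟨jn, hj⟩ := by
          obtain ⟨w, hw⟩ := hdvdS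
          refine ⟨w, mul_left_cancel₀ (pow_ne_zero jn hπ.ne_zero) ?_⟩
          rw [hw, pow_succ]
          ring
        have hSnu : ¬ IsUnit (S ⟨jn, hj⟩) := fun hu =>
          hπ.not_isUnit (isUnit_of_dvd_unit hdS hu)
        have hznu : ¬ IsUnit (z (e (⟨jn, hj⟩, i))) := by
          intro hu
          exact hSnu (aux_unit_sum d a hresan (fun i' => z (e (⟨jn, hj⟩, i'))) ⟨i, hu⟩)
        have hmem : z (e (⟨jn, hj⟩, i)) ∈ IsLocalRing.maximalIdeal A :=
          (IsLocalRing.mem_maximalIdeal _).mpr hznu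
        rwa [Irreducible.maximalIdeal_eq hπ, Ideal.mem_span_singleton] at hmem
    -- contradiction with the unit entry of z
    obtain ⟨⟨j, i⟩, hji⟩ : ∃ p : Fin d × Fin n, e p = cu := ⟨e.symm cu, e.apply_symm_apply cu⟩
    have : π ∣ z cu := by
      have := key (j : ℕ) j.isLt i
      simpa [hji] using this
    exact hπ.not_isUnit (isUnit_of_dvd_unit this hcu)
end

section
/- Let A be a discrete valuation ring with fraction field K and residue field k of characteristic not dividing d!. Then u_diag(d,K) ≥ d · u_diag(d,k). -/
section Aux

variable {A : Type*} [CommRing A] [IsDomain A] [IsDiscreteValuationRing A]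

open IsLocalRing

/-- `π ∣ y ↔ residue y = 0` -/
lemma dvd_iff_residue_eq_zero {π : A} (hπ : Irreducible π) (y : A) :
    π ∣ y ↔ residue A y = 0 := by
  rw [residue_eq_zero_iff, (IsDiscreteValuationRing.irreducible_iff_uniformizer π).mp hπ,
    Ideal.mem_span_singleton]

lemma key_step {d n : ℕ} (π : A) (hπ : Irreducible π)
    (c : Fin n → A)
    (haniso : ¬ IsotropicDiag (ResidueField A) d fun i => residue A (c i))
    (x : Fin d × Fin n → A)
    (hx : ∑ p : Fin d × Fin n, π ^ (p.1 : ℕ) * c p.2 * x p ^ d = 0) :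
    ∀ p, π ∣ x p := by
  -- strong claim by induction on j
  have main : ∀ j : ℕ, j ≤ d → ∀ p : Fin d × Fin n, (p.1 : ℕ) < j → π ∣ x p := by
    intro j
    induction j with
    | zero => intro _ p hp; omega
    | succ j ih =>
      intro hj p hp
      have ihj := ih (by omega)
      -- the terms with first index ≠ j are divisible by π^(j+1)
      have hdvd : ∀ q : Fin d × Fin n, (q.1 : ℕ) ≠ j →
          π ^ (j + 1) ∣ π ^ (q.1 : ℕ) * c q.2 * x q ^ d := by
        intro q hq
        rcases lt_or_gt_of_ne hq with h | h
        · -- small index: π ∣ x q, so π^d ∣ x q ^ d, and j+1 ≤ d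
          have h1 : π ^ (j + 1) ∣ x q ^ d :=
            dvd_trans (pow_dvd_pow π hj) (pow_dvd_pow_of_dvd (ihj q h) d)
          exact Dvd.dvd.mul_left h1 _
        · exact Dvd.dvd.mul_right (Dvd.dvd.mul_right (pow_dvd_pow π h) _) _
      -- split the sum over the first index
      have jlt : j < d := by omega
      set jf : Fin d := ⟨j, jlt⟩ with hjf
      have e1 : ∑ p : Fin d × Fin n, π ^ (p.1 : ℕ) * c p.2 * x p ^ d
          = ∑ j' : Fin d, ∑ i : Fin n, π ^ (j' : ℕ) * c i * x (j', i) ^ d :=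
        Fintype.sum_prod_type _
      have e2 : (∑ j' : Fin d, ∑ i : Fin n, π ^ (j' : ℕ) * c i * x (j', i) ^ d)
          = (∑ i : Fin n, π ^ (jf : ℕ) * c i * x (jf, i) ^ d)
            + ∑ j' ∈ Finset.univ.erase jf, ∑ i : Fin n, π ^ (j' : ℕ) * c i * x (j', i) ^ d :=
        (Finset.add_sum_erase _ _ (Finset.mem_univ jf)).symm
      have hdvdsum : π ^ (j + 1) ∣
          ∑ j' ∈ Finset.univ.erase jf, ∑ i : Fin n, π ^ (j' : ℕ) * c i * x (j', i) ^ d := by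
        apply Finset.dvd_sum
        intro j' hj'
        apply Finset.dvd_sum
        intro i _
        apply hdvd (j', i)
        intro hcon
        exact (Finset.mem_erase.mp hj').1 (Fin.ext hcon)
      have hdvd2 : π ^ (j + 1) ∣ ∑ i : Fin n, π ^ (jf : ℕ) * c i * x (jf, i) ^ d := by
        have h0 : (∑ i : Fin n, π ^ (jf : ℕ) * c i * x (jf, i) ^ d)
            = - ∑ j' ∈ Finset.univ.erase jf, ∑ i : Fin n, π ^ (j' : ℕ) * c i * x (j', i) ^ d := by
          have := e1 ▸ hx
          rw [e2] at this
          exact eq_neg_of_add_eq_zero_left this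
        rw [h0]
        exact dvd_neg.mpr hdvdsum
      have hfac : (∑ i : Fin n, π ^ (jf : ℕ) * c i * x (jf, i) ^ d)
          = π ^ j * ∑ i : Fin n, c i * x (jf, i) ^ d := by
        rw [Finset.mul_sum]; apply Finset.sum_congr rfl; intro i _; ring
      rw [hfac, pow_succ'] at hdvd2
      have hcancel : π ∣ ∑ i : Fin n, c i * x (jf, i) ^ d := by
        rw [mul_comm (π) (π ^ j)] at hdvd2
        exact (mul_dvd_mul_iff_left (pow_ne_zero j hπ.ne_zero)).mp hdvd2
      -- reduce mod π
      have hres : ∑ i : Fin n, residue A (c i) * residue A (x (jf, i)) ^ d = 0 := by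
        have : residue A (∑ i : Fin n, c i * x (jf, i) ^ d) = 0 :=
          (dvd_iff_residue_eq_zero hπ _).mp hcancel
        rw [map_sum] at this
        simpa using this
      -- anisotropy of the residue form forces all residues zero
      have hzero : ∀ i : Fin n, residue A (x (jf, i)) = 0 := by
        by_contra hcon
        push_neg at hcon
        obtain ⟨i0, hi0⟩ := hcon
        exact haniso ⟨fun i => residue A (x (jf, i)),
          fun h0 => hi0 (congrFun h0 i0), hres⟩
      -- conclude for p: p.1 < j+1 means p.1 < j (done by ihj) or p.1 = j
      rcases Nat.lt_or_ge (p.1 : ℕ) j with h | h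
      · exact ihj p h
      · have : (p.1 : ℕ) = j := by omega
        have hpj : p.1 = jf := Fin.ext (by simpa using this)
        rw [dvd_iff_residue_eq_zero hπ]
        have := hzero p.2
        rwa [← hpj] at this
  intro p
  exact main d le_rfl p p.1.isLt

lemma key_A {d n : ℕ} (π : A) (hπ : Irreducible π)
    (c : Fin n → A)
    (haniso : ¬ IsotropicDiag (ResidueField A) d fun i => residue A (c i))
    (x : Fin d × Fin n → A)
    (hx : ∑ p : Fin d × Fin n, π ^ (p.1 : ℕ) * c p.2 * x p ^ d = 0) :
    ∀ p, x p = 0 := by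
  -- every coordinate is divisible by π^m for all m
  have hall : ∀ m : ℕ, ∀ x : Fin d × Fin n → A,
      (∑ p : Fin d × Fin n, π ^ (p.1 : ℕ) * c p.2 * x p ^ d = 0) →
      ∀ p, π ^ m ∣ x p := by
    intro m
    induction m with
    | zero => intro x _ p; simp
    | succ m ih =>
      intro x hx p
      have h1 : ∀ q, π ∣ x q := key_step π hπ c haniso x hx
      choose y hy using h1
      have hy2 : ∑ p : Fin d × Fin n, π ^ (p.1 : ℕ) * c p.2 * y p ^ d = 0 := by
        have hmul : π ^ d * (∑ p : Fin d × Fin n, π ^ (p.1 : ℕ) * c p.2 * y p ^ d) = 0 := by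
          rw [Finset.mul_sum, ← hx]
          apply Finset.sum_congr rfl
          intro q _
          rw [hy q, mul_pow]
          ring
        rcases mul_eq_zero.mp hmul with h | h
        · exact absurd h (pow_ne_zero d hπ.ne_zero)
        · exact h
      have := ih y hy2 p
      rw [hy p, pow_succ, mul_comm (π ^ m) π]
      exact mul_dvd_mul_left π this
  intro p
  rw [← IsDiscreteValuationRing.addVal_eq_top_iff (R := A)]
  rw [ENat.eq_top_iff_forall_ge]
  intro m
  have := hall m x hx p
  calc (m : ℕ∞) = IsDiscreteValuationRing.addVal A (π ^ m) := (hπ.addVal_pow m).symm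
    _ ≤ IsDiscreteValuationRing.addVal A (x p) :=
        IsDiscreteValuationRing.addVal_le_iff_dvd.mpr this

lemma key_K {d n : ℕ} (π : A) (hπ : Irreducible π)
    (c : Fin n → A)
    (haniso : ¬ IsotropicDiag (ResidueField A) d fun i => residue A (c i)) :
    ¬ IsotropicDiag (FractionRing A) d
      (fun p : Fin d × Fin n => algebraMap A (FractionRing A) (π ^ (p.1 : ℕ) * c p.2)) := by
  rintro ⟨x, hx0, hxsum⟩
  obtain ⟨s, hs⟩ := IsLocalization.exist_integer_multiples_of_finite (nonZeroDivisors A) x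
  choose y hy using hs
  have hsK : algebraMap A (FractionRing A) (s : A) ≠ 0 := by
    simpa using (IsFractionRing.injective A (FractionRing A)).ne_iff.mpr
      (nonZeroDivisors.coe_ne_zero s)
  have heq : algebraMap A (FractionRing A)
      (∑ p : Fin d × Fin n, π ^ (p.1 : ℕ) * c p.2 * y p ^ d) = 0 := by
    rw [map_sum]
    have : ∀ p : Fin d × Fin n,
        algebraMap A (FractionRing A) (π ^ (p.1 : ℕ) * c p.2 * y p ^ d)
          = algebraMap A (FractionRing A) ((s : A) ^ d)
            * (algebraMap A (FractionRing A) (π ^ (p.1 : ℕ) * c p.2) * x p ^ d) := by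
      intro p
      rw [map_mul, map_pow, hy p, Algebra.smul_def, map_pow]
      ring
    rw [Finset.sum_congr rfl fun p _ => this p, ← Finset.mul_sum, hxsum, mul_zero]
  have hA : ∑ p : Fin d × Fin n, π ^ (p.1 : ℕ) * c p.2 * y p ^ d = 0 := by
    apply IsFractionRing.injective A (FractionRing A)
    rw [heq, map_zero]
  have hy0 := key_A π hπ c haniso y hA
  apply hx0
  funext p
  have : algebraMap A (FractionRing A) (y p) = 0 := by rw [hy0 p, map_zero]
  rw [hy p, Algebra.smul_def] at this
  rcases mul_eq_zero.mp this with h | h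
  · exact absurd h hsK
  · exact h

lemma IsotropicDiag_comp_equiv {K : Type*} [Field K] (d : ℕ) {ι ι' : Type*}
    [Fintype ι] [Fintype ι'] (e : ι ≃ ι') (a : ι' → K)
    (h : IsotropicDiag K d (a ∘ e)) : IsotropicDiag K d a := by
  obtain ⟨x, hx0, hxs⟩ := h
  refine ⟨x ∘ e.symm, ?_, ?_⟩
  · intro h0
    apply hx0
    funext i
    have := congrFun h0 (e i)
    simpa using this
  · rw [← Equiv.sum_comp e (fun i' => a i' * (x ∘ e.symm) i' ^ d)]
    simpa using hxs

/-- From an anisotropic diagonal form of dimension `n` over the residue field, we get one of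
dimension `d * n` over the fraction field. -/
lemma exists_big_aniso (d n : ℕ)
    (a : Fin n → ResidueField A) (ha : ∀ i, a i ≠ 0)
    (haniso : ¬ IsotropicDiag (ResidueField A) d a) :
    ∃ b : Fin (d * n) → FractionRing A, (∀ i, b i ≠ 0) ∧
      ¬ IsotropicDiag (FractionRing A) d b := by
  obtain ⟨π, hπ⟩ := IsDiscreteValuationRing.exists_irreducible A
  have hsurj := IsLocalRing.residue_surjective (R := A)
  choose c hc using fun i => hsurj (a i)
  have haniso' : ¬ IsotropicDiag (ResidueField A) d fun i => residue A (c i) := by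
    have : (fun i => residue A (c i)) = a := funext hc
    rw [this]; exact haniso
  set f : Fin d × Fin n → FractionRing A :=
    fun p => algebraMap A (FractionRing A) (π ^ (p.1 : ℕ) * c p.2) with hf
  refine ⟨f ∘ finProdFinEquiv.symm, ?_, ?_⟩
  · intro i h0
    have : (π ^ ((finProdFinEquiv.symm i).1 : ℕ) * c (finProdFinEquiv.symm i).2 : A) = 0 := by
      apply IsFractionRing.injective A (FractionRing A)
      rw [map_zero]
      exact h0
    rcases mul_eq_zero.mp this with h | h
    · exact pow_ne_zero _ hπ.ne_zero h
    · exact ha _ (by rw [← hc, h, map_zero])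
  · intro hiso
    apply key_K π hπ c haniso'
    exact IsotropicDiag_comp_equiv d finProdFinEquiv.symm f hiso

end Aux

/-- **Let `A` be a discrete valuation ring with fraction field `K` and residue field `k` of
characteristic not dividing `d!`.  Then `u_diag(d,K) ≥ d · u_diag(d,k)` (in `ℕ∞`, so the
inequality also holds when the values are infinite).** -/
theorem uDiag_fractionField_ge
    (A : Type*) [CommRing A] [IsDomain A] [IsDiscreteValuationRing A]
    (d : ℕ) (hd : 1 ≤ d) (hchar : (d.factorial : IsLocalRing.ResidueField A) ≠ 0) :
    (d : ℕ∞) * uDiag d (IsLocalRing.ResidueField A) ≤ uDiag d (FractionRing A) := by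
  classical
  set k := IsLocalRing.ResidueField A
  set K := FractionRing A
  -- key bound: each good `n` over `k` gives `d * n ≤ uDiag d K`
  have key : ∀ n : ℕ, (∃ a : Fin n → k, (∀ i, a i ≠ 0) ∧ ¬ IsotropicDiag k d a) →
      ((d * n : ℕ) : ℕ∞) ≤ uDiag d K := by
    intro n ⟨a, ha, haniso⟩
    obtain ⟨b, hb, hbaniso⟩ := exists_big_aniso d n a ha haniso
    exact le_iSup₂ (f := fun m (_ : ∃ a : Fin m → K, (∀ i, a i ≠ 0) ∧ ¬ IsotropicDiag K d a)
      => (m : ℕ∞)) (d * n) ⟨b, hb, hbaniso⟩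
  rcases eq_top_or_lt_top (uDiag d k) with htop | hlt
  · rw [htop, ENat.mul_top (by exact_mod_cast Nat.one_le_iff_ne_zero.mp hd)]
    rw [top_le_iff, ENat.eq_top_iff_forall_ge]
    intro N
    have hN : (N : ℕ∞) < uDiag d k := htop ▸ WithTop.coe_lt_top N
    rw [uDiag, lt_iSup_iff] at hN
    obtain ⟨n, hn⟩ := hN
    rw [lt_iSup_iff] at hn
    obtain ⟨hSn, hNn⟩ := hn
    have hn' : (N : ℕ∞) ≤ ((d * n : ℕ) : ℕ∞) := by
      have : N ≤ n := by exact_mod_cast hNn.le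
      exact_mod_cast le_trans this (Nat.le_mul_of_pos_left n (by omega))
    exact le_trans hn' (key n hSn)
  · obtain ⟨m, hm⟩ := WithTop.ne_top_iff_exists.mp hlt.ne
    rw [← hm]
    rcases Nat.eq_zero_or_pos m with rfl | hmpos
    · exact le_trans (le_of_eq (mul_zero (d : ℕ∞))) zero_le
    · have hlt1 : ((m - 1 : ℕ) : ℕ∞) < uDiag d k := by
        rw [← hm]
        exact Nat.cast_lt.mpr (Nat.sub_lt hmpos one_pos)
      rw [uDiag, lt_iSup_iff] at hlt1
      obtain ⟨n, hn⟩ := hlt1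
      rw [lt_iSup_iff] at hn
      obtain ⟨hSn, hmn⟩ := hn
      have hmn' : m ≤ n := by
        have : (m - 1 : ℕ) < n := by exact_mod_cast hmn
        omega
      calc (d : ℕ∞) * (m : ℕ∞) = ((d * m : ℕ) : ℕ∞) := by exact_mod_cast (Nat.cast_mul d m).symm
        _ ≤ ((d * n : ℕ) : ℕ∞) := by exact_mod_cast Nat.mul_le_mul_left d hmn'
        _ ≤ uDiag d K := key n hSn
end

section
/- Let q be a prime power and d ≥ 1, and set d* = gcd(d, q−1). Then u_diag(d, 𝔽_q) ≤ d*. In particular, if d is relatively prime to q−1 then every diagonal form of degree d in at least 2 variables over 𝔽_q is isotropic, i.e., u_diag(d,𝔽_q) = 1. -/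
lemma key_pow (F : Type*) [Field F] [Fintype F] (d : ℕ) {y : F} (hy : y ≠ 0) :
    ∃ x : F, x ≠ 0 ∧ x ^ d = y ^ (Nat.gcd d (Fintype.card F - 1)) := by
  classical
  set m := Fintype.card F - 1 with hm
  set u : Fˣ := Units.mk0 y hy with hu
  have hum : u ^ (m : ℤ) = 1 := by
    rw [zpow_natCast, hm, ← Fintype.card_units]
    exact pow_card_eq_one
  refine ⟨((u ^ Nat.gcdA d m : Fˣ) : F), Units.ne_zero _, ?_⟩
  have key : (u ^ Nat.gcdA d m) ^ (d : ℤ) = u ^ (Nat.gcd d m : ℤ) := by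
    rw [← zpow_mul]
    have hb := Nat.gcd_eq_gcd_ab d m
    have h2 : (Nat.gcdA d m) * (d : ℤ) = (Nat.gcd d m : ℤ) - m * Nat.gcdB d m := by
      linarith [hb]
    rw [h2, zpow_sub, zpow_mul, hum, one_zpow]; simp
  have : ((u ^ Nat.gcdA d m : Fˣ) : F) ^ d = ((u ^ (Nat.gcd d m : ℤ) : Fˣ) : F) := by
    rw [← key]
    push_cast
    exact (zpow_natCast _ d).symm
  rw [this]
  rw [zpow_natCast]
  push_cast [hu]
  rfl

lemma isotropic_of_lt {F : Type*} [Field F] [Fintype F] (d : ℕ) (hd : 1 ≤ d)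
    {n : ℕ} (a : Fin n → F) (hn : Nat.gcd d (Fintype.card F - 1) < n) :
    IsotropicDiag F d a := by
  classical
  set D := Nat.gcd d (Fintype.card F - 1) with hD
  have hD1 : 1 ≤ D := Nat.gcd_pos_of_pos_left _ hd
  obtain ⟨p, hp⟩ := CharP.exists F
  have hpprime : p.Prime := CharP.char_is_prime F p
  set f : MvPolynomial (Fin n) F := ∑ i, MvPolynomial.C (a i) * MvPolynomial.X i ^ D with hf
  have heval : ∀ x : Fin n → F, MvPolynomial.eval x f = ∑ i, a i * x i ^ D := by
    intro x
    simp [hf]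
  have hdeg : f.totalDegree < Fintype.card (Fin n) := by
    rw [Fintype.card_fin]
    refine lt_of_le_of_lt ?_ hn
    refine (MvPolynomial.totalDegree_finset_sum _ _).trans ?_
    apply Finset.sup_le
    intro i _
    calc (MvPolynomial.C (a i) * MvPolynomial.X i ^ D).totalDegree
        ≤ (MvPolynomial.C (a i)).totalDegree + (MvPolynomial.X (R := F) i ^ D).totalDegree :=
          MvPolynomial.totalDegree_mul _ _
      _ ≤ 0 + D := by
          gcongr
          · exact le_of_eq (MvPolynomial.totalDegree_C _)
          · exact le_of_eq (MvPolynomial.totalDegree_X_pow _ _)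
      _ = D := zero_add D
  have hdvd := char_dvd_card_solutions p hdeg
  have h0 : MvPolynomial.eval (0 : Fin n → F) f = 0 := by
    rw [heval]
    simp [zero_pow (by omega : D ≠ 0)]
  have hcard : 1 < Fintype.card {x : Fin n → F // MvPolynomial.eval x f = 0} := by
    have hpos : 0 < Fintype.card {x : Fin n → F // MvPolynomial.eval x f = 0} :=
      Fintype.card_pos_iff.mpr ⟨⟨0, h0⟩⟩
    have := Nat.le_of_dvd hpos hdvd
    have := hpprime.two_le
    omega
  obtain ⟨⟨x, hx⟩, hxne⟩ := Fintype.exists_ne_of_one_lt_card hcard ⟨0, h0⟩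
  have hx0 : x ≠ 0 := by
    intro h; apply hxne; subst h; rfl
  rw [heval] at hx
  -- build the degree-d solution
  have hchoice : ∀ i, ∃ z : F, (x i ≠ 0 → z ≠ 0) ∧ a i * z ^ d = a i * x i ^ D := by
    intro i
    by_cases h : x i = 0
    · exact ⟨0, fun hc => absurd h hc, by simp [h, zero_pow (by omega : d ≠ 0),
        zero_pow (by omega : D ≠ 0)]⟩
    · obtain ⟨z, hz0, hzd⟩ := key_pow F d h
      exact ⟨z, fun _ => hz0, by rw [hzd]⟩
  choose z hz1 hz2 using hchoice
  refine ⟨z, ?_, ?_⟩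
  · obtain ⟨i, hi⟩ := Function.ne_iff.mp hx0
    exact Function.ne_iff.mpr ⟨i, hz1 i hi⟩
  · rw [Finset.sum_congr rfl (fun i _ => hz2 i), hx]

/-- **Let `𝔽_q` be a finite field with `q` elements, `d ≥ 1`, and `d* = gcd(d, q−1)`.
Then `u_diag(d, 𝔽_q) ≤ d*`.  In particular, if `d` is relatively prime to `q−1`, then every
diagonal form of degree `d` in at least 2 variables over `𝔽_q` is isotropic and
`u_diag(d, 𝔽_q) = 1`.** -/
theorem uDiag_finite_field (F : Type*) [Field F] [Fintype F] (d : ℕ) (hd : 1 ≤ d) :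
    uDiag d F ≤ (Nat.gcd d (Fintype.card F - 1) : ℕ∞) ∧
    (Nat.Coprime d (Fintype.card F - 1) →
      (∀ (n : ℕ) (a : Fin n → F), 2 ≤ n → (∀ i, a i ≠ 0) → IsotropicDiag F d a) ∧
        uDiag d F = 1) := by
  have hle : uDiag d F ≤ (Nat.gcd d (Fintype.card F - 1) : ℕ∞) := by
    rw [uDiag]
    refine iSup₂_le ?_
    intro n hn
    obtain ⟨a, _, hani⟩ := hn
    by_contra hlt
    push_neg at hlt
    have : Nat.gcd d (Fintype.card F - 1) < n := by exact_mod_cast hlt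
    exact hani (isotropic_of_lt d hd a this)
  refine ⟨hle, fun hcop => ?_⟩
  have hg : Nat.gcd d (Fintype.card F - 1) = 1 := hcop
  constructor
  · intro n a hn _
    exact isotropic_of_lt d hd a (by omega)
  · refine le_antisymm (by rw [hg] at hle; exact_mod_cast hle) ?_
    have hani : ∃ a : Fin 1 → F, (∀ i, a i ≠ 0) ∧ ¬ IsotropicDiag F d a := by
      refine ⟨fun _ => 1, fun _ => one_ne_zero, ?_⟩
      rintro ⟨x, hx0, hx⟩
      simp only [Fin.sum_univ_one, one_mul] at hx
      have : x 0 = 0 := pow_eq_zero_iff (by omega : d ≠ 0) |>.mp hx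
      apply hx0
      funext i
      fin_cases i
      exact this
    have : ((1 : ℕ) : ℕ∞) ≤ uDiag d F := by
      rw [uDiag]
      exact le_iSup₂ (f := fun (n : ℕ) (_ : ∃ a : Fin n → F,
        (∀ i, a i ≠ 0) ∧ ¬ IsotropicDiag F d a) => (n : ℕ∞)) 1 hani
    exact_mod_cast this
end

section
/- Let K be a p-adic field with residue field 𝔽_q, where p does not divide d!. Then u_diag(d,K) = d · u_diag(d,𝔽_q); in particular u_diag(d,K) ≤ d². -/
namespace UDAux

set_option linter.unusedSectionVars false

section general
variable {K : Type*} [Field K] {d : ℕ}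

/-- The set of dimensions of anisotropic diagonal forms of degree `d`. -/
def AnisoSet (d : ℕ) (K : Type*) [Field K] : Set ℕ :=
  {n | ∃ a : Fin n → K, (∀ i, a i ≠ 0) ∧ ¬ IsotropicDiag K d a}

lemma zero_mem_anisoSet : 0 ∈ AnisoSet d K := by
  refine ⟨fun i => i.elim0, fun i => i.elim0, ?_⟩
  rintro ⟨x, hx, -⟩
  exact hx (funext fun i => i.elim0)

lemma uDiag_eq_of (m : ℕ) (h1 : m ∈ AnisoSet d K) (h2 : ∀ n ∈ AnisoSet d K, n ≤ m) :
    uDiag d K = m := by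
  refine le_antisymm ?_ ?_
  · exact iSup₂_le fun n hn => Nat.cast_le.mpr (h2 n hn)
  · exact le_iSup_of_le m (le_iSup_of_le h1 le_rfl)

end general


section general2
variable {K : Type*} [Field K] {d : ℕ}

lemma isotropic_of_scaled {ι : Type*} [Fintype ι] {a c : ι → K} (hc : ∀ i, c i ≠ 0)
    (h : IsotropicDiag K d (fun i => a i * c i ^ d)) : IsotropicDiag K d a := by
  obtain ⟨x, hx, hs⟩ := h
  refine ⟨fun i => c i * x i, ?_, ?_⟩
  · intro h0
    apply hx
    funext i
    have := congrFun h0 i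
    simp only [Pi.zero_apply, mul_eq_zero] at this
    simpa using this.resolve_left (hc i)
  · rw [← hs]
    exact Finset.sum_congr rfl fun i _ => by ring

lemma isotropic_of_comp {ι ι' : Type*} [Fintype ι] [Fintype ι'] {a : ι → K} {e : ι' → ι}
    (he : Function.Injective e) (hd : 1 ≤ d)
    (h : IsotropicDiag K d (a ∘ e)) : IsotropicDiag K d a := by
  obtain ⟨x, hx, hs⟩ := h
  classical
  refine ⟨Function.extend e x 0, ?_, ?_⟩
  · obtain ⟨i, hi⟩ := Function.ne_iff.mp hx
    intro h0
    apply hi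
    have := congrFun h0 (e i)
    rwa [he.extend_apply, Pi.zero_apply] at this
  · rw [← Finset.sum_subset (Finset.subset_univ (Finset.univ.image e))]
    · rw [Finset.sum_image (fun i _ j _ h => he h)]
      rw [← hs]
      exact Finset.sum_congr rfl fun i _ => by rw [he.extend_apply]; rfl
    · intro i _ hi
      have : Function.extend e x 0 i = 0 := by
        rw [Function.extend_apply']
        · rfl
        · rintro ⟨j, rfl⟩
          exact hi (Finset.mem_image_of_mem e (Finset.mem_univ j))
      rw [this, zero_pow (by omega), mul_zero]

/-- Chevalley–Warning: over a finite field, a diagonal form of degree `d` in more than `d`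
variables is isotropic. -/
lemma isotropic_of_finite {F : Type*} [Field F] [Fintype F] {n : ℕ} (hd : 1 ≤ d)
    (hn : d < n) (a : Fin n → F) : IsotropicDiag F d a := by
  classical
  set f : MvPolynomial (Fin n) F := ∑ i, MvPolynomial.C (a i) * MvPolynomial.X i ^ d with hf
  have hdeg : f.totalDegree < Fintype.card (Fin n) := by
    rw [Fintype.card_fin]
    refine lt_of_le_of_lt ?_ hn
    refine (MvPolynomial.totalDegree_finset_sum _ _).trans (Finset.sup_le fun i _ => ?_)
    refine (MvPolynomial.totalDegree_mul _ _).trans ?_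
    simp [MvPolynomial.totalDegree_X_pow]
  set p := ringChar F with hp
  haveI hprime : Fact p.Prime := ⟨CharP.char_is_prime F p⟩
  have hdvd := char_dvd_card_solutions p hdeg
  have h0 : (MvPolynomial.eval (0 : Fin n → F)) f = 0 := by
    simp only [hf, map_sum, map_mul, map_pow, MvPolynomial.eval_C, MvPolynomial.eval_X,
      Pi.zero_apply]
    simp [zero_pow (by omega : d ≠ 0)]
  haveI hne : Nonempty { x : Fin n → F // MvPolynomial.eval x f = 0 } := ⟨⟨0, h0⟩⟩
  have hcard : 1 < Fintype.card { x : Fin n → F // MvPolynomial.eval x f = 0 } :=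
    Nat.lt_of_le_of_ne Fintype.card_pos
      (fun h1 => (hprime.out.one_lt.ne' (Nat.dvd_one.mp (h1 ▸ hdvd))).elim)
  haveI : Nontrivial { x : Fin n → F // MvPolynomial.eval x f = 0 } :=
    Fintype.one_lt_card_iff_nontrivial.mp hcard
  obtain ⟨y, hy⟩ := exists_ne (⟨0, h0⟩ : { x : Fin n → F // MvPolynomial.eval x f = 0 })
  refine ⟨y.1, fun h0' => hy (Subtype.ext h0'), ?_⟩
  have := y.2
  simpa only [hf, map_sum, map_mul, map_pow, MvPolynomial.eval_C, MvPolynomial.eval_X] using this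


end general2


open IsLocalRing Polynomial

variable {A : Type*} [CommRing A] [IsDomain A] [IsDiscreteValuationRing A]
variable {d m : ℕ} {ϖ : A} (hϖ : Irreducible ϖ) {b : Fin m → A}

section core
variable (hd : 1 ≤ d)
  (hres : ¬ IsotropicDiag (ResidueField A) d (fun i => residue A (b i)))

include hϖ hd hres

/-- If the residues of `b` form an anisotropic diagonal form, then in any solution of
`∑ ϖ^j b_i y_{j,i}^d = 0` every entry is divisible by `ϖ`. -/
lemma row_div (y : Fin d × Fin m → A)
    (hE : ∑ p : Fin d × Fin m, ϖ ^ (p.1 : ℕ) * (b p.2 * y p ^ d) = 0) :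
    ∀ p, ϖ ∣ y p := by
  classical
  set T : Fin d → A := fun j => ∑ i : Fin m, ϖ ^ (j : ℕ) * (b i * y (j, i) ^ d) with hT
  have hE' : ∑ j : Fin d, T j = 0 := by
    rw [← hE, Fintype.sum_prod_type]
  suffices H : ∀ J : ℕ, ∀ j : Fin d, (j : ℕ) < J → ∀ i, ϖ ∣ y (j, i) by
    rintro ⟨j, i⟩
    exact H d j j.2 i
  intro J
  induction J with
  | zero => exact fun j hj => absurd hj (Nat.not_lt_zero _)
  | succ J IH =>
    intro j hj i
    rcases Nat.lt_or_ge (j : ℕ) J with h | h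
    · exact IH j h i
    have hjJ : (j : ℕ) = J := le_antisymm (Nat.lt_succ_iff.mp hj) h
    -- all earlier rows are divisible by ϖ
    have hearly : ∀ j' : Fin d, (j' : ℕ) < (j : ℕ) → ∀ i', ϖ ∣ y (j', i') :=
      fun j' hj' i' => IH j' (hjJ ▸ hj') i'
    -- ϖ^(j+1) divides every other row's contribution
    have hdvd : ∀ j' ∈ Finset.univ.erase j, ϖ ^ ((j : ℕ) + 1) ∣ T j' := by
      intro j' hj'
      have hne : j' ≠ j := (Finset.mem_erase.mp hj').1
      refine Finset.dvd_sum fun i' _ => ?_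
      rcases lt_or_gt_of_ne (fun h => hne (Fin.ext h) : (j' : ℕ) ≠ (j : ℕ)) with hlt | hgt
      · -- earlier row: y divisible by ϖ, so term divisible by ϖ^(j'+d)
        obtain ⟨z, hz⟩ := hearly j' hlt i'
        refine (pow_dvd_pow ϖ (show (j : ℕ) + 1 ≤ (j' : ℕ) + d by omega)).trans ?_
        rw [hz, pow_add, mul_pow]
        exact mul_dvd_mul_left _ ((dvd_mul_right (ϖ ^ d) (z ^ d)).mul_left (b i'))
      · exact dvd_mul_of_dvd_left (pow_dvd_pow ϖ (by omega)) _
    have hTj : ϖ ^ ((j : ℕ) + 1) ∣ T j := by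
      have hsplit : ∑ j' ∈ Finset.univ.erase j, T j' + T j = 0 := by
        rw [Finset.sum_erase_add _ _ (Finset.mem_univ j)]; exact hE'
      rw [eq_neg_of_add_eq_zero_right hsplit]
      exact dvd_neg.mpr (Finset.dvd_sum hdvd)
    -- cancel ϖ^j : ϖ divides S_j
    have hS : ϖ ∣ ∑ i : Fin m, b i * y (j, i) ^ d := by
      have hne : ϖ ^ (j : ℕ) ≠ 0 := pow_ne_zero _ hϖ.ne_zero
      rw [hT] at hTj
      simp only [← Finset.mul_sum] at hTj
      rw [pow_succ] at hTj
      exact (mul_dvd_mul_iff_left hne).mp hTj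
    -- reduce mod ϖ and use anisotropy
    have hker : residue A (∑ i : Fin m, b i * y (j, i) ^ d) = 0 := by
      rw [residue_eq_zero_iff, hϖ.maximalIdeal_eq, Ideal.mem_span_singleton]
      exact hS
    have hres0 : ∑ i : Fin m, residue A (b i) * residue A (y (j, i)) ^ d = 0 := by
      rw [← hker, map_sum]
      exact Finset.sum_congr rfl fun i _ => by rw [map_mul, map_pow]
    have hx0 : (fun i : Fin m => residue A (y (j, i))) = 0 := by
      by_contra hx
      exact hres ⟨_, hx, hres0⟩
    have : residue A (y (j, i)) = 0 := congrFun hx0 i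
    rw [residue_eq_zero_iff, hϖ.maximalIdeal_eq, Ideal.mem_span_singleton] at this
    exact this

/-- Any solution of the lifted system is zero. -/
lemma solution_zero (y : Fin d × Fin m → A)
    (hE : ∑ p : Fin d × Fin m, ϖ ^ (p.1 : ℕ) * (b p.2 * y p ^ d) = 0) : y = 0 := by
  have key : ∀ N : ℕ, ∀ y : Fin d × Fin m → A,
      (∑ p : Fin d × Fin m, ϖ ^ (p.1 : ℕ) * (b p.2 * y p ^ d) = 0) → ∀ p, ϖ ^ N ∣ y p := by
    intro N
    induction N with
    | zero => intro y _ p; simpa using one_dvd _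
    | succ N IH =>
      intro y hE0 p
      have hdiv := row_div hϖ hd hres y hE0
      choose z hz using hdiv
      have hEz : ∑ p : Fin d × Fin m, ϖ ^ (p.1 : ℕ) * (b p.2 * z p ^ d) = 0 := by
        have : ∑ p : Fin d × Fin m, ϖ ^ (p.1 : ℕ) * (b p.2 * y p ^ d)
            = ϖ ^ d * ∑ p : Fin d × Fin m, ϖ ^ (p.1 : ℕ) * (b p.2 * z p ^ d) := by
          rw [Finset.mul_sum]
          refine Finset.sum_congr rfl fun p _ => ?_
          rw [hz p, mul_pow]
          ring
        rw [hE0] at this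
        exact (mul_eq_zero.mp this.symm).resolve_left (pow_ne_zero _ hϖ.ne_zero)
      obtain ⟨w, hw⟩ := IH z hEz p
      exact ⟨w, by rw [hz p, hw, pow_succ, mul_assoc, mul_comm ϖ _, ← mul_assoc, mul_assoc _ ϖ w,
        mul_comm ϖ w, ← mul_assoc]⟩
  funext p
  by_contra hyp
  obtain ⟨n, u, hu⟩ := IsDiscreteValuationRing.eq_unit_mul_pow_irreducible hyp hϖ
  obtain ⟨c, hc⟩ := key (n + 1) y hE p
  rw [hu, pow_succ] at hc
  have : (u : A) = ϖ * c := by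
    have hne : ϖ ^ n ≠ 0 := pow_ne_zero _ hϖ.ne_zero
    apply mul_left_cancel₀ hne
    rw [mul_comm (ϖ ^ n) (u : A), hc]
    ring
  exact hϖ.not_isUnit (isUnit_of_dvd_unit ⟨c, this⟩ u.isUnit)

lemma not_isotropic_fraction (hbu : ∀ i, IsUnit (b i)) :
    ¬ IsotropicDiag (FractionRing A) d
      (fun p : Fin d × Fin m => algebraMap A (FractionRing A) (ϖ ^ (p.1 : ℕ) * b p.2)) := by
  rintro ⟨x, hx, hsum⟩
  obtain ⟨s, hs⟩ := IsLocalization.exist_integer_multiples_of_finite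
    (nonZeroDivisors A) x
  choose y hy using hs
  have hinj : Function.Injective (algebraMap A (FractionRing A)) :=
    IsFractionRing.injective A (FractionRing A)
  set c : FractionRing A := algebraMap A (FractionRing A) (s : A) with hcdef
  have hc0 : c ≠ 0 := fun h => nonZeroDivisors.ne_zero s.2
    (hinj (show algebraMap A (FractionRing A) (s : A) = algebraMap A (FractionRing A) 0 by
      rw [map_zero]; exact h))
  have hEy : ∑ p : Fin d × Fin m, ϖ ^ (p.1 : ℕ) * (b p.2 * y p ^ d) = 0 := by
    apply hinj
    rw [map_sum, map_zero]
    have : ∑ p : Fin d × Fin m,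
        algebraMap A (FractionRing A) (ϖ ^ (p.1 : ℕ) * (b p.2 * y p ^ d))
        = c ^ d * ∑ p : Fin d × Fin m,
            algebraMap A (FractionRing A) (ϖ ^ (p.1 : ℕ) * b p.2) * x p ^ d := by
      rw [Finset.mul_sum]
      refine Finset.sum_congr rfl fun p _ => ?_
      have hyx : algebraMap A (FractionRing A) (y p) = c * x p := by
        rw [hy p, Algebra.smul_def]
      simp only [map_mul, map_pow]
      rw [hyx]
      ring
    rw [this, hsum, mul_zero]
  have hy0 := solution_zero hϖ hd hres y hEy
  apply hx
  funext p
  have : algebraMap A (FractionRing A) (y p) = c * x p := by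
    rw [hy p, Algebra.smul_def]
  rw [hy0] at this
  simp only [Pi.zero_apply, map_zero] at this
  exact (mul_eq_zero.mp this.symm).resolve_left hc0

end core



/-- Hensel lifting: a diagonal form with unit coefficients whose residue form is isotropic
is itself isotropic over the fraction field. -/
lemma isotropic_of_residue_isotropic [IsAdicComplete (maximalIdeal A) A]
    {d n : ℕ} (hd : 1 ≤ d) (hdchar : (d : ResidueField A) ≠ 0)
    {u : Fin n → A} (hu : ∀ i, IsUnit (u i))
    (hiso : IsotropicDiag (ResidueField A) d (fun i => residue A (u i))) :
    IsotropicDiag (FractionRing A) d (fun i => algebraMap A (FractionRing A) (u i)) := by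
  classical
  obtain ⟨xb, hxb, hsb⟩ := hiso
  obtain ⟨i0, hi0⟩ := Function.ne_iff.mp hxb
  replace hi0 : xb i0 ≠ 0 := by simpa using hi0
  choose y hy using fun i => residue_surjective (R := A) (xb i)
  obtain ⟨U, hU⟩ := hu i0
  set w : A := ↑U⁻¹ with hwdef
  have hw : w * u i0 = 1 := by rw [hwdef, ← hU]; exact_mod_cast U.inv_mul
  set S : A := ∑ i ∈ Finset.univ.erase i0, u i * y i ^ d with hS
  set f : A[X] := X ^ d + C (w * S) with hf
  have hmonic : f.Monic := monic_X_pow_add_C _ (by omega)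
  have hsb' : ∑ i : Fin n, residue A (u i) * xb i ^ d = 0 := by simpa using hsb
  -- the residue of S
  have hresS : residue A S = - (residue A (u i0) * xb i0 ^ d) := by
    have h1 : residue A (u i0) * xb i0 ^ d
        + ∑ i ∈ Finset.univ.erase i0, residue A (u i) * xb i ^ d = 0 := by
      rw [Finset.add_sum_erase _ (fun i => residue A (u i) * xb i ^ d) (Finset.mem_univ i0)]
      exact hsb'
    have h2 : residue A S = ∑ i ∈ Finset.univ.erase i0, residue A (u i) * xb i ^ d := by
      rw [hS, map_sum]
      exact Finset.sum_congr rfl fun i _ => by rw [map_mul, map_pow, hy]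
    rw [h2]
    linear_combination h1
  have hwres : residue A w * residue A (u i0) = 1 := by
    rw [← map_mul, hw, map_one]
  have heval : f.eval (y i0) ∈ maximalIdeal A := by
    rw [← residue_eq_zero_iff]
    have : f.eval (y i0) = y i0 ^ d + w * S := by simp [hf]
    rw [this, map_add, map_pow, hy, map_mul, hresS]
    linear_combination (-(xb i0 ^ d)) * hwres
  have hderiv : f.derivative.eval (y i0) = (d : A) * y i0 ^ (d - 1) := by
    simp [hf, derivative_X_pow]
  have hdu : IsUnit (f.derivative.eval (y i0)) := by
    rw [← notMem_maximalIdeal, ← residue_eq_zero_iff, hderiv, map_mul, map_pow, hy, map_natCast]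
    exact mul_ne_zero hdchar (pow_ne_zero _ hi0)
  -- apply Henselianness
  obtain ⟨t, ht, htmod⟩ := HenselianRing.is_henselian (I := maximalIdeal A) f hmonic (y i0) heval
    (by
      show IsUnit (residue A (f.derivative.eval (y i0)))
      refine isUnit_iff_ne_zero.mpr ?_
      rw [hderiv, map_mul, map_pow, hy, map_natCast]
      exact mul_ne_zero hdchar (pow_ne_zero _ hi0))
  have htres : residue A t = xb i0 := by
    have : residue A (t - y i0) = 0 := (residue_eq_zero_iff _).mpr htmod
    rw [map_sub, sub_eq_zero] at this
    rw [this, hy]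
  have ht0 : t ≠ 0 := fun h => hi0 (by rw [← htres, h, map_zero])
  have htroot : t ^ d + w * S = 0 := by
    have h := ht
    rw [hf] at h
    simpa [IsRoot] using h
  -- the solution over A
  classical
  set xA : Fin n → A := Function.update y i0 t with hxA
  have hsumA : ∑ i : Fin n, u i * xA i ^ d = 0 := by
    rw [← Finset.add_sum_erase _ (fun i => u i * xA i ^ d) (Finset.mem_univ i0)]
    have h1 : xA i0 = t := by rw [hxA]; exact Function.update_self i0 t y
    have h2 : ∑ i ∈ Finset.univ.erase i0, u i * xA i ^ d = S := by
      rw [hS]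
      refine Finset.sum_congr rfl fun i hi => ?_
      rw [hxA, Function.update_of_ne (Finset.mem_erase.mp hi).1]
    rw [h1, h2]
    linear_combination u i0 * htroot - S * hw
  -- transfer to the fraction field
  refine ⟨fun i => algebraMap A (FractionRing A) (xA i), ?_, ?_⟩
  · intro h0
    have := congrFun h0 i0
    simp only [Pi.zero_apply, hxA, Function.update_self] at this
    exact ht0 ((map_eq_zero_iff _ (IsFractionRing.injective A (FractionRing A))).mp this)
  · rw [← map_zero (algebraMap A (FractionRing A)), ← hsumA, map_sum]
    exact Finset.sum_congr rfl fun i _ => by rw [map_mul, map_pow]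


lemma isotropic_const_mul {K : Type*} [Field K] {d : ℕ} {ι : Type*} [Fintype ι] {a : ι → K}
    (c : K) (h : IsotropicDiag K d a) : IsotropicDiag K d (fun i => c * a i) := by
  obtain ⟨x, hx, hs⟩ := h
  exact ⟨x, hx, by rw [show ∑ i, c * a i * x i ^ d = c * ∑ i, a i * x i ^ d by
    rw [Finset.mul_sum]; exact Finset.sum_congr rfl fun i _ => by ring, hs, mul_zero]⟩

/-- Normalization: every nonzero element of the fraction field can be scaled by a `d`-th
power into the image of `u * ϖ^j` with `u` a unit and `j < d`. -/
lemma normalize {d : ℕ} (hd : 1 ≤ d) {ϖ : A} (hϖ : Irreducible ϖ)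
    (a : FractionRing A) (ha : a ≠ 0) :
    ∃ (c : FractionRing A) (u : A) (j : ℕ), c ≠ 0 ∧ IsUnit u ∧ j < d ∧
      a * c ^ d = algebraMap A (FractionRing A) (u * ϖ ^ j) := by
  obtain ⟨⟨r, s⟩, hmk⟩ := IsLocalization.mk'_surjective (nonZeroDivisors A) a
  have hspec : a * algebraMap A (FractionRing A) (s : A) = algebraMap A (FractionRing A) r := by
    rw [← hmk]; exact IsLocalization.mk'_spec _ r s
  have hinj : Function.Injective (algebraMap A (FractionRing A)) := IsFractionRing.injective A (FractionRing A)
  have hs0 : algebraMap A (FractionRing A) (s : A) ≠ 0 := fun h =>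
    nonZeroDivisors.ne_zero s.2 (hinj (by rw [h, map_zero]))
  have hr0 : r ≠ 0 := by
    intro hr
    rw [hr, map_zero] at hspec
    exact ha ((mul_eq_zero.mp hspec).resolve_right hs0)
  have hrs : r * (s : A) ^ (d - 1) ≠ 0 :=
    mul_ne_zero hr0 (pow_ne_zero _ (nonZeroDivisors.ne_zero s.2))
  obtain ⟨e, U, hU⟩ := IsDiscreteValuationRing.eq_unit_mul_pow_irreducible hrs hϖ
  have hq0 : algebraMap A (FractionRing A) (ϖ ^ (e / d)) ≠ 0 := fun h =>
    pow_ne_zero _ hϖ.ne_zero (hinj (by rw [h, map_zero]))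
  have key : a * (algebraMap A (FractionRing A) (s : A)) ^ d
      = algebraMap A (FractionRing A) ((U : A) * ϖ ^ (e % d)) * (algebraMap A (FractionRing A) (ϖ ^ (e / d))) ^ d := by
    have hpow : (algebraMap A (FractionRing A) (s : A)) ^ d
        = algebraMap A (FractionRing A) (s : A) * (algebraMap A (FractionRing A) (s : A)) ^ (d - 1) := by
      rw [← pow_succ']
      congr 1
      omega
    rw [hpow, ← mul_assoc, hspec, ← map_pow, ← map_mul, hU, ← map_pow, ← map_mul]
    congr 1
    rw [mul_assoc, ← pow_mul, ← pow_add]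
    congr 2
    exact (Nat.mod_add_div' e d).symm
  refine ⟨algebraMap A (FractionRing A) (s : A) * (algebraMap A (FractionRing A) (ϖ ^ (e / d)))⁻¹, (U : A), e % d,
    mul_ne_zero hs0 (inv_ne_zero hq0), U.isUnit, Nat.mod_lt _ (by omega), ?_⟩
  rw [mul_pow, inv_pow, ← mul_assoc, key, mul_assoc,
    mul_inv_cancel₀ (pow_ne_zero _ hq0), mul_one]

/-- Upper bound: any diagonal form of degree `d` over `K` in more than `d*m` variables,
where every form in `m+1` variables over the residue field is isotropic, is isotropic. -/
lemma isotropic_of_large [IsAdicComplete (maximalIdeal A) A] {d m n : ℕ} (hd : 1 ≤ d)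
    (hdchar : (d : ResidueField A) ≠ 0) {ϖ : A} (hϖ : Irreducible ϖ)
    (hk : ∀ a : Fin (m + 1) → ResidueField A, (∀ i, a i ≠ 0) →
      IsotropicDiag (ResidueField A) d a)
    (hn : d * m < n) (a : Fin n → FractionRing A) (ha : ∀ i, a i ≠ 0) :
    IsotropicDiag (FractionRing A) d a := by
  classical
  choose c u j hc hu hj hnorm using fun i => normalize hd hϖ (a i) (ha i)
  apply isotropic_of_scaled hc
  rw [show (fun i => a i * c i ^ d)
      = fun i => algebraMap A (FractionRing A) (u i * ϖ ^ (j i)) from funext hnorm]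
  set jcl : Fin n → Fin d := fun i => ⟨j i, hj i⟩ with hjcl
  obtain ⟨j0, hj0⟩ := Fintype.exists_lt_card_fiber_of_mul_lt_card jcl (by simpa using hn)
  obtain ⟨t, hts, htc⟩ := Finset.exists_subset_card_eq
    (show m + 1 ≤ (Finset.univ.filter fun i => jcl i = j0).card from hj0)
  set e := t.orderEmbOfFin htc with he
  apply isotropic_of_comp e.injective hd
  have hje : ∀ i : Fin (m + 1), j (e i) = (j0 : ℕ) := by
    intro i
    have h1 := hts (Finset.orderEmbOfFin_mem t htc i)
    have h2 := (Finset.mem_filter.mp h1).2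
    exact congrArg Fin.val h2
  rw [show ((fun i => algebraMap A (FractionRing A) (u i * ϖ ^ (j i)))
        ∘ e)
      = fun i => algebraMap A (FractionRing A) (ϖ ^ (j0 : ℕ))
          * algebraMap A (FractionRing A) (u (e i)) from
    funext fun i => by simp only [Function.comp_apply, hje i, map_mul]; ring]
  apply isotropic_const_mul
  exact isotropic_of_residue_isotropic hd hdchar (fun i => hu (e i))
    (hk _ (fun i => ((hu (e i)).map (residue A)).ne_zero))


end UDAux

/-- **Let `K` be a `p`-adic field** (formalized as the fraction field of a complete discrete
valuation ring `A` with finite residue field `𝔽_q`) **where `p = char 𝔽_q` does not divide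
`d!`.  Then `u_diag(d,K) = d · u_diag(d,𝔽_q)`; in particular `u_diag(d,K) ≤ d²`.** -/
theorem uDiag_padic (A : Type*) [CommRing A] [IsDomain A] [IsDiscreteValuationRing A]
    [IsAdicComplete (IsLocalRing.maximalIdeal A) A]
    [Fintype (IsLocalRing.ResidueField A)]
    (d : ℕ) (hd : 1 ≤ d) (hchar : (d.factorial : IsLocalRing.ResidueField A) ≠ 0) :
    uDiag d (FractionRing A) = (d : ℕ∞) * uDiag d (IsLocalRing.ResidueField A) ∧
      uDiag d (FractionRing A) ≤ (d : ℕ∞) ^ 2 := by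
  classical
  open IsLocalRing UDAux in
  -- `d` is nonzero in the residue field
  have hdchar : (d : IsLocalRing.ResidueField A) ≠ 0 := by
    intro h0
    apply hchar
    obtain ⟨e, rfl⟩ : ∃ e, d = e + 1 := ⟨d - 1, by omega⟩
    rw [Nat.factorial_succ, Nat.cast_mul, h0, zero_mul]
  -- the supremum over the residue field
  have hsub : ∀ n ∈ UDAux.AnisoSet d (IsLocalRing.ResidueField A), n ≤ d := by
    intro n hn
    by_contra h
    obtain ⟨a, _, hani⟩ := hn
    exact hani (UDAux.isotropic_of_finite hd (by omega) a)
  have hbdd : BddAbove (UDAux.AnisoSet d (IsLocalRing.ResidueField A)) := ⟨d, hsub⟩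
  have hne : (UDAux.AnisoSet d (IsLocalRing.ResidueField A)).Nonempty :=
    ⟨0, UDAux.zero_mem_anisoSet⟩
  set m := sSup (UDAux.AnisoSet d (IsLocalRing.ResidueField A)) with hm
  have hm_mem : m ∈ UDAux.AnisoSet d (IsLocalRing.ResidueField A) := Nat.sSup_mem hne hbdd
  have hm_le : m ≤ d := hsub m hm_mem
  have hmax : ∀ n ∈ UDAux.AnisoSet d (IsLocalRing.ResidueField A), n ≤ m :=
    fun n hn => le_csSup hbdd hn
  have huk : uDiag d (IsLocalRing.ResidueField A) = (m : ℕ∞) :=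
    UDAux.uDiag_eq_of m hm_mem hmax
  -- every form of dimension m+1 over the residue field is isotropic
  have hk_iso : ∀ a : Fin (m + 1) → IsLocalRing.ResidueField A, (∀ i, a i ≠ 0) →
      IsotropicDiag (IsLocalRing.ResidueField A) d a := by
    intro a ha
    by_contra hani
    exact absurd (hmax (m + 1) ⟨a, ha, hani⟩) (by omega)
  obtain ⟨ϖ, hϖ⟩ := IsDiscreteValuationRing.exists_irreducible A
  -- the lower bound: an anisotropic form of dimension d * m over the fraction field
  obtain ⟨bbar, hbbar, hbani⟩ := hm_mem
  choose b hb using fun i => IsLocalRing.residue_surjective (R := A) (bbar i)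
  have hbu : ∀ i, IsUnit (b i) := by
    intro i
    rw [← IsLocalRing.notMem_maximalIdeal]
    intro hmem
    exact hbbar i (by rw [← hb i]; exact (IsLocalRing.residue_eq_zero_iff _).mpr hmem)
  have hres : ¬ IsotropicDiag (IsLocalRing.ResidueField A) d
      (fun i => IsLocalRing.residue A (b i)) := by
    rw [show (fun i => IsLocalRing.residue A (b i)) = bbar from funext hb]
    exact hbani
  have hlow : d * m ∈ UDAux.AnisoSet d (FractionRing A) := by
    refine ⟨(fun p : Fin d × Fin m => algebraMap A (FractionRing A) (ϖ ^ (p.1 : ℕ) * b p.2))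
      ∘ finProdFinEquiv.symm, ?_, ?_⟩
    · intro i
      simp only [Function.comp_apply]
      intro h0
      have := (map_eq_zero_iff _ (IsFractionRing.injective A (FractionRing A))).mp h0
      exact (mul_ne_zero (pow_ne_zero _ hϖ.ne_zero)
        ((hbu _).ne_zero)) this
    · intro hiso
      exact UDAux.not_isotropic_fraction hϖ hd hres hbu
        (UDAux.isotropic_of_comp finProdFinEquiv.symm.injective hd hiso)
  have hupper : ∀ n ∈ UDAux.AnisoSet d (FractionRing A), n ≤ d * m := by
    intro n hn
    by_contra h
    obtain ⟨a, ha, hani⟩ := hn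
    exact hani (UDAux.isotropic_of_large hd hdchar hϖ hk_iso (by omega) a ha)
  have huK : uDiag d (FractionRing A) = ((d * m : ℕ) : ℕ∞) :=
    UDAux.uDiag_eq_of (d * m) hlow hupper
  constructor
  · rw [huK, huk, Nat.cast_mul]
  · rw [huK, show ((d : ℕ∞) ^ 2) = ((d ^ 2 : ℕ) : ℕ∞) by rw [Nat.cast_pow]]
    exact Nat.cast_le.mpr (by nlinarith)
end

section
/- Let k be an algebraically closed field of characteristic not dividing d!, let K be an m-local field with residue field k, and let F be a one-variable function field over K such that some normal K-curve with function field F has a K-point. Then u_diag(d,F) ≥ d^{m+1}. -/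
/-- `F` is a `C_r`-field. -/
def IsCrField (F : Type*) [Field F] (r : ℕ) : Prop :=
  ∀ (d n : ℕ), 1 ≤ d → d ^ r < n → ∀ f : MvPolynomial (Fin n) F, f.IsHomogeneous d →
    ∃ x : Fin n → F, x ≠ 0 ∧ MvPolynomial.eval x f = 0

/-- A discrete valuation ring `A` is *excellent* if the extension `K̂/K` is separable, where
`K = Frac A` and `K̂` is the fraction field of the completion of `A`. -/
def ExcellentDVR (A : Type*) [CommRing A] [IsDomain A] [IsDiscreteValuationRing A] : Prop :=
  ∃ f : FractionRing A →+*
      FractionRing (AdicCompletion (IsLocalRing.maximalIdeal A) A),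
    (∀ a : A, f (algebraMap A (FractionRing A) a) =
      algebraMap (AdicCompletion (IsLocalRing.maximalIdeal A) A)
        (FractionRing (AdicCompletion (IsLocalRing.maximalIdeal A) A))
        (algebraMap A (AdicCompletion (IsLocalRing.maximalIdeal A) A) a)) ∧
    letI := f.toAlgebra
    Algebra.IsSeparable (FractionRing A)
      (FractionRing (AdicCompletion (IsLocalRing.maximalIdeal A) A))

/-- One step in the tower defining an `m`-local field: `K` is (isomorphic to) the fraction
field of an excellent Henselian discrete valuation ring with residue field (isomorphic to)
`k`. -/
structure HenselianDVRStep (k K : Type) [Field k] [Field K] : Type 1 where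
  A : Type
  [commRing : CommRing A]
  [isDomain : IsDomain A]
  [dvr : IsDiscreteValuationRing A]
  [henselian : HenselianLocalRing A]
  excellent : ExcellentDVR A
  fracEquiv : FractionRing A ≃+* K
  resEquiv : IsLocalRing.ResidueField A ≃+* k

/-- `K` is an `m`-local field with residue field `k`: there is a tower of fields
`k = k₀, k₁, …, k_m = K` where each `kᵢ` is the fraction field of an excellent Henselian
discrete valuation ring with residue field `k_{i−1}`. -/
def IsMLocalField (m : ℕ) (k K : Type) [Field k] [Field K] : Prop :=
  ∃ (fld : Fin (m + 1) → Type) (_inst : ∀ i, Field (fld i)),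
    Nonempty (fld 0 ≃+* k) ∧ Nonempty (fld (Fin.last m) ≃+* K) ∧
      ∀ i : Fin m, Nonempty (HenselianDVRStep (fld i.castSucc) (fld i.succ))

section Aux

/-- There is an anisotropic diagonal form of degree `d` in `n` variables over `K`,
with all coefficients nonzero. -/
def HasAniso (K : Type*) [Field K] (d n : ℕ) : Prop :=
  ∃ a : Fin n → K, (∀ i, a i ≠ 0) ∧ ¬ IsotropicDiag K d a

theorem hasAniso_one (K : Type*) [Field K] {d : ℕ} (hd : 1 ≤ d) : HasAniso K d 1 := by
  refine ⟨fun _ => 1, fun _ => one_ne_zero, ?_⟩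
  rintro ⟨x, hx, hsum⟩
  rw [Fin.sum_univ_one, one_mul, pow_eq_zero_iff (by omega)] at hsum
  exact hx (funext fun i => by rw [Subsingleton.elim i 0, hsum, Pi.zero_apply])

theorem HasAniso.congr {K L : Type*} [Field K] [Field L] (e : K ≃+* L) {d n : ℕ}
    (h : HasAniso K d n) : HasAniso L d n := by
  obtain ⟨a, h0, hani⟩ := h
  refine ⟨fun i => e (a i), fun i => by
    simpa [map_eq_zero_iff e e.injective] using h0 i, ?_⟩
  rintro ⟨x, hx, hsum⟩
  refine hani ⟨fun i => e.symm (x i), ?_, ?_⟩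
  · intro h0'
    refine hx (funext fun i => ?_)
    have := congrFun h0' i
    simp only [Pi.zero_apply] at this ⊢
    have := congrArg e this
    simpa using this
  · apply e.injective
    rw [map_sum, map_zero]
    rw [← hsum]
    refine Finset.sum_congr rfl fun i _ => ?_
    rw [map_mul, map_pow, RingEquiv.apply_symm_apply]

theorem HasAniso.le_uDiag {K : Type*} [Field K] {d n : ℕ} (h : HasAniso K d n) :
    (n : ℕ∞) ≤ uDiag d K :=
  le_iSup₂ (f := fun (n : ℕ) (_ : ∃ a : Fin n → K, (∀ i, a i ≠ 0) ∧ ¬ IsotropicDiag K d a)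
    => (n : ℕ∞)) n h

open IsLocalRing IsDiscreteValuationRing in
/-- The key "Springer-type" step: if the residue field of a DVR has an anisotropic diagonal
degree-`d` form in `n` variables, then its fraction field has one in `d * n` variables. -/
theorem hasAniso_step {A Fr : Type*} [CommRing A] [IsDomain A] [IsDiscreteValuationRing A]
    [Field Fr] [Algebra A Fr] [IsFractionRing A Fr] {d n : ℕ} (hd : 1 ≤ d)
    (h : HasAniso (ResidueField A) d n) : HasAniso Fr d (d * n) := by
  obtain ⟨b, hb0, hbani⟩ := h
  obtain ⟨π, hirr⟩ := IsDiscreteValuationRing.exists_irreducible A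
  have hmax : IsLocalRing.maximalIdeal A = Ideal.span {π} :=
    (IsDiscreteValuationRing.irreducible_iff_uniformizer π).mp hirr
  have hmem_iff : ∀ a : A, a ∈ IsLocalRing.maximalIdeal A ↔ π ∣ a := by
    intro a; rw [hmax, Ideal.mem_span_singleton]
  -- lift the coefficients
  have hsurj : Function.Surjective (residue A) := Ideal.Quotient.mk_surjective
  choose u hu using fun i => hsurj (b i)
  have hu_notdvd : ∀ i, ¬ π ∣ u i := by
    intro i hdvd
    exact hb0 i (by rw [← hu i, residue_eq_zero_iff, hmem_iff]; exact hdvd)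
  have hu_ne : ∀ i, u i ≠ 0 := fun i h0 => hu_notdvd i (h0 ▸ dvd_zero π)
  have halg : Function.Injective (algebraMap A Fr) := IsFractionRing.injective A Fr
  set e : Fin d × Fin n ≃ Fin (d * n) := finProdFinEquiv with he
  refine ⟨fun p => algebraMap A Fr (π ^ ((e.symm p).1 : ℕ) * u (e.symm p).2), ?_, ?_⟩
  · intro p
    rw [Ne, map_eq_zero_iff _ halg, mul_eq_zero]
    push_neg
    exact ⟨pow_ne_zero _ hirr.ne_zero, hu_ne _⟩
  classical
  rintro ⟨x, hx, hsum⟩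
  set x' : Fin d × Fin n → Fr := fun q => x (e q) with hx'
  have hsum' : ∑ q : Fin d × Fin n,
      algebraMap A Fr (π ^ ((q.1 : ℕ)) * u q.2) * x' q ^ d = 0 := by
    rw [← hsum]
    refine (Fintype.sum_equiv e _ _ fun q => ?_)
    simp [x', Equiv.symm_apply_apply]
  -- clear denominators
  obtain ⟨c, hc⟩ := IsLocalization.exist_integer_multiples_of_finite (nonZeroDivisors A) x'
  choose y hy using hc
  have hcne : algebraMap A Fr (c : A) ≠ 0 := by
    rw [Ne, map_eq_zero_iff _ halg]
    exact nonZeroDivisors.coe_ne_zero c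
  obtain ⟨p₁, hp₁⟩ : ∃ p, x p ≠ 0 := by
    by_contra h0; push_neg at h0; exact hx (funext fun p => h0 p)
  have hyq : ∀ q, algebraMap A Fr (y q) = algebraMap A Fr (c : A) * x' q := by
    intro q; rw [hy q, Algebra.smul_def]
  have hyne : y (e.symm p₁) ≠ 0 := by
    intro h0
    have h2 := hyq (e.symm p₁)
    rw [h0, map_zero] at h2
    have h3 : x' (e.symm p₁) = 0 := by
      rcases mul_eq_zero.mp h2.symm with h | h
      · exact absurd h hcne
      · exact h
    simp only [hx', Equiv.apply_symm_apply] at h3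
    exact hp₁ h3
  -- the equation over A
  have key : ∑ q : Fin d × Fin n, π ^ ((q.1 : ℕ)) * u q.2 * y q ^ d = 0 := by
    apply halg
    rw [map_zero, map_sum]
    have : ∀ q : Fin d × Fin n,
        algebraMap A Fr (π ^ ((q.1 : ℕ)) * u q.2 * y q ^ d) =
          algebraMap A Fr (c : A) ^ d *
            (algebraMap A Fr (π ^ ((q.1 : ℕ)) * u q.2) * x' q ^ d) := by
      intro q
      rw [map_mul, map_pow, hyq q, mul_pow]
      ring
    rw [Finset.sum_congr rfl fun q _ => this q, ← Finset.mul_sum, hsum', mul_zero]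
  -- divide by the minimal power of π
  obtain ⟨q₀, -, hq₀min⟩ := Finset.exists_min_image Finset.univ
    (fun q => addVal A (y q)) ⟨e.symm p₁, Finset.mem_univ _⟩
  have hvne : addVal A (y q₀) ≠ ⊤ := by
    intro htop
    have h1 := hq₀min (e.symm p₁) (Finset.mem_univ _)
    rw [htop, top_le_iff] at h1
    exact hyne (addVal_eq_top_iff.mp h1)
  set M : ℕ := (addVal A (y q₀)).toNat with hMdef
  have hM : (M : ℕ∞) = addVal A (y q₀) := ENat.coe_toNat hvne
  have hdvdM : ∀ q, π ^ M ∣ y q := by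
    intro q
    rw [← addVal_le_iff_dvd, hirr.addVal_pow, hM]
    exact hq₀min q (Finset.mem_univ _)
  choose z hz using hdvdM
  have hz₀ : ¬ π ∣ z q₀ := by
    rintro ⟨w, hw⟩
    have : π ^ (M + 1) ∣ y q₀ := ⟨w, by rw [hz q₀, hw, pow_succ]; ring⟩
    have h5 := addVal_le_iff_dvd.mpr this
    rw [hirr.addVal_pow, ← hM, Nat.cast_le] at h5
    omega
  have key2 : ∑ q : Fin d × Fin n, π ^ ((q.1 : ℕ)) * u q.2 * z q ^ d = 0 := by
    have hmul : π ^ (M * d) * ∑ q : Fin d × Fin n, π ^ ((q.1 : ℕ)) * u q.2 * z q ^ d = 0 := by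
      rw [← key, Finset.mul_sum]
      refine Finset.sum_congr rfl fun q _ => ?_
      rw [hz q, mul_pow, ← pow_mul]
      ring
    rcases mul_eq_zero.mp hmul with h | h
    · exact absurd h (pow_ne_zero _ hirr.ne_zero)
    · exact h
  set T : Fin d → A := fun j => ∑ i, u i * z (j, i) ^ d with hT
  have key3 : ∑ j : Fin d, π ^ (j : ℕ) * T j = 0 := by
    rw [← key2, Fintype.sum_prod_type]
    refine Finset.sum_congr rfl fun j _ => ?_
    simp only [hT, Finset.mul_sum]
    exact Finset.sum_congr rfl fun i _ => (mul_assoc _ _ _).symm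
  set Js : Finset (Fin d) := Finset.univ.filter (fun j => ∃ i, ¬ π ∣ z (j, i)) with hJs
  have hne : Js.Nonempty := by
    refine ⟨q₀.1, ?_⟩
    rw [hJs, Finset.mem_filter]
    exact ⟨Finset.mem_univ _, ⟨q₀.2, by rwa [Prod.mk.eta]⟩⟩
  set j₀ : Fin d := Js.min' hne with hj₀
  have hT0 : ¬ π ∣ T j₀ := by
    intro hdvd
    obtain ⟨-, i₁, hi₁⟩ := Finset.mem_filter.mp (Js.min'_mem hne)
    apply hbani
    refine ⟨fun i => residue A (z (j₀, i)), ?_, ?_⟩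
    · intro h0
      refine hi₁ ?_
      rw [← hmem_iff, ← residue_eq_zero_iff]
      exact congrFun h0 i₁
    · have : ∀ i, b i * residue A (z (j₀, i)) ^ d = residue A (u i * z (j₀, i) ^ d) := by
        intro i; rw [map_mul, map_pow, hu]
      have h7 : residue A (T j₀) = 0 := by
        rw [residue_eq_zero_iff, hmem_iff]; exact hdvd
      rw [Finset.sum_congr rfl fun i _ => this i, ← map_sum]
      exact h7
  have hrest : ∀ j ∈ (Finset.univ : Finset (Fin d)).erase j₀, π ^ ((j₀ : ℕ) + 1) ∣ π ^ (j : ℕ) * T j := by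
    intro j hj
    have hjne : j ≠ j₀ := (Finset.mem_erase.mp hj).1
    by_cases hjJ : j ∈ Js
    · have h1 : j₀ ≤ j := Js.min'_le j hjJ
      have h2 : (j₀ : ℕ) + 1 ≤ (j : ℕ) := by
        have : j₀ < j := lt_of_le_of_ne h1 (Ne.symm hjne)
        exact Nat.succ_le_of_lt this
      exact (pow_dvd_pow π h2).mul_right _
    · have hall : ∀ i, π ∣ z (j, i) := by
        rw [hJs, Finset.mem_filter] at hjJ
        push_neg at hjJ
        exact hjJ (Finset.mem_univ _)
      have hTd : π ^ d ∣ T j := by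
        rw [hT]
        refine Finset.dvd_sum fun i _ => ?_
        exact (pow_dvd_pow_of_dvd (hall i) d).mul_left _
      have h1 : (j₀ : ℕ) + 1 ≤ d := j₀.2
      exact ((pow_dvd_pow π h1).trans hTd).mul_left _
  have hdvd0 : π ^ ((j₀ : ℕ) + 1) ∣ π ^ (j₀ : ℕ) * T j₀ := by
    have heq : π ^ (j₀ : ℕ) * T j₀ =
        -∑ j ∈ (Finset.univ : Finset (Fin d)).erase j₀, π ^ (j : ℕ) * T j := by
      have h6 := Finset.add_sum_erase Finset.univ (fun j : Fin d => π ^ (j : ℕ) * T j)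
        (Finset.mem_univ j₀)
      rw [key3] at h6
      exact eq_neg_of_add_eq_zero_left h6
    rw [heq, dvd_neg]
    exact Finset.dvd_sum hrest
  apply hT0
  rw [pow_succ] at hdvd0
  exact (mul_dvd_mul_iff_left (pow_ne_zero (j₀ : ℕ) hirr.ne_zero)).mp hdvd0

end Aux

/-- **Let `k` be an algebraically closed field of characteristic not dividing `d!`, `K` an
`m`-local field with residue field `k`, and `F` a one-variable function field over `K` such
that some normal `K`-curve with function field `F` has a `K`-point.  Then
`u_diag(d,F) ≥ d^{m+1}`.**

The existence of a `K`-point on a normal `K`-curve with function field `F` is formalized by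
its local ring: a discrete valuation ring `A ⊆ F` which is a valuation subring of `F`
containing `K`, with fraction field `F` and residue field `K`. -/
theorem uDiag_functionField_ge (d m : ℕ) (hd : 1 ≤ d)
    (k K F : Type) [Field k] [Field K] [Field F] [IsAlgClosed k]
    (hchar : (d.factorial : k) ≠ 0)
    (hml : IsMLocalField m k K)
    [Algebra K F]
    (hfunction : ∃ x : F, Transcendental K x ∧
      FiniteDimensional (IntermediateField.adjoin K {x}) F)
    (hpoint : ∃ (A : ValuationSubring F) (_ : IsDiscreteValuationRing A),
      (∀ c : K, algebraMap K F c ∈ A) ∧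
        Nonempty (IsLocalRing.ResidueField A ≃+* K)) :
    (d : ℕ∞) ^ (m + 1) ≤ uDiag d F := by
  obtain ⟨fld, inst, ⟨e0⟩, ⟨em⟩, hstep⟩ := hml
  letI : ∀ i, Field (fld i) := inst
  have tower : ∀ (i : ℕ) (hi : i < m + 1), HasAniso (fld ⟨i, hi⟩) d (d ^ i) := by
    intro i
    induction i with
    | zero => intro hi; rw [pow_zero]; exact hasAniso_one _ hd
    | succ i ih =>
      intro hi
      have hi' : i < m + 1 := by omega
      have him : i < m := by omega
      obtain ⟨S⟩ := hstep ⟨i, him⟩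
      letI := S.commRing
      letI := S.isDomain
      letI := S.dvr
      have h1 : HasAniso (IsLocalRing.ResidueField S.A) d (d ^ i) :=
        (ih hi').congr S.resEquiv.symm
      have h2 : HasAniso (FractionRing S.A) d (d * d ^ i) := hasAniso_step hd h1
      have h3 : HasAniso (fld ⟨i + 1, hi⟩) d (d * d ^ i) := h2.congr S.fracEquiv
      have hpow : d ^ (i + 1) = d * d ^ i := by ring
      rw [hpow]
      exact h3
  have hK : HasAniso K d (d ^ m) := (tower m (lt_add_one m)).congr em
  obtain ⟨A, hdvr, -, ⟨eres⟩⟩ := hpoint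
  letI := hdvr
  have hres : HasAniso (IsLocalRing.ResidueField A) d (d ^ m) := hK.congr eres.symm
  have hF : HasAniso F d (d ^ (m + 1)) := by
    have h8 := hasAniso_step (A := A) (Fr := F) hd hres
    have hpow : d ^ (m + 1) = d * d ^ m := by ring
    rw [hpow]
    exact h8
  calc (d : ℕ∞) ^ (m + 1) = ((d ^ (m + 1) : ℕ) : ℕ∞) := by rw [Nat.cast_pow]
    _ ≤ uDiag d F := hF.le_uDiag
end

section
/- Let d ≥ 3, let k be a field with char k not dividing d!, and let a₁,...,aₙ, b₁,...,bₙ ∈ k^×. The diagonal forms ⟨a₁,...,aₙ⟩ and ⟨b₁,...,bₙ⟩ of degree d are isomorphic if and only if there is a permutation π ∈ Sₙ such that bᵢ/a_{π(i)} ∈ (k^×)^d for every i. -/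
open Finset in

lemma polar_pow {R : Type*} [CommRing R] (d : ℕ) (s : Fin d → R) :
    ∑ S : Finset (Fin d), (-1 : R) ^ (d - S.card) * (∑ t ∈ S, s t) ^ d
      = (d.factorial : R) * ∏ t, s t := by
  have expand : ∀ S : Finset (Fin d),
      (∑ t ∈ S, s t) ^ d = ∑ g ∈ Fintype.piFinset (fun _ : Fin d => S), ∏ m, s (g m) := by
    intro S
    rw [← Finset.prod_univ_sum]
    simp [Finset.prod_const]
  calc ∑ S : Finset (Fin d), (-1 : R) ^ (d - S.card) * (∑ t ∈ S, s t) ^ d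
      = ∑ S : Finset (Fin d), ∑ g ∈ Fintype.piFinset (fun _ : Fin d => S),
          (-1 : R) ^ (d - S.card) * ∏ m, s (g m) := by
        simp_rw [expand, Finset.mul_sum]
    _ = ∑ g : Fin d → Fin d, ∑ S ∈ Finset.univ.filter (fun S : Finset (Fin d) => ∀ m, g m ∈ S),
          (-1 : R) ^ (d - S.card) * ∏ m, s (g m) := by
        apply Finset.sum_comm'
        intro S g
        simp [Fintype.mem_piFinset]
    _ = ∑ g : Fin d → Fin d,
          (∑ S ∈ Finset.univ.filter (fun S : Finset (Fin d) => ∀ m, g m ∈ S),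
            (-1 : R) ^ (d - S.card)) * ∏ m, s (g m) := by
        simp_rw [Finset.sum_mul]
    _ = ∑ g : Fin d → Fin d,
          (if Function.Surjective g then 1 else 0) * ∏ m, s (g m) := by
        refine Finset.sum_congr rfl fun g _ => ?_
        congr 1
        have : ∑ S ∈ Finset.univ.filter (fun S : Finset (Fin d) => ∀ m, g m ∈ S),
            (-1 : R) ^ (d - S.card)
            = ∑ V ∈ (Finset.univ.image g)ᶜ.powerset, (-1 : R) ^ V.card := by
          refine Finset.sum_bij' (fun S _ => Sᶜ) (fun V _ => Vᶜ) ?_ ?_ ?_ ?_ ?_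
          · intro S hS
            simp only [Finset.mem_filter, Finset.mem_univ, true_and] at hS
            simp only [Finset.mem_powerset]
            intro x hx
            simp only [Finset.mem_compl, Finset.mem_image] at hx ⊢
            rintro ⟨m, -, rfl⟩
            exact hx (hS m)
          · intro V hV
            simp only [Finset.mem_powerset] at hV
            simp only [Finset.mem_filter, Finset.mem_univ, true_and]
            intro m
            simp only [Finset.mem_compl]
            intro hmem
            have := hV hmem
            simp only [Finset.mem_compl, Finset.mem_image] at this
            exact this ⟨m, Finset.mem_univ m, rfl⟩
          · intro S _; simp
          · intro V _; simp
          · intro S _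
            congr 1
            rw [Finset.card_compl, Fintype.card_fin]
        rw [this]
        have hz : ((∑ V ∈ (Finset.univ.image g)ᶜ.powerset, (-1 : ℤ) ^ V.card : ℤ) : R)
            = ∑ V ∈ (Finset.univ.image g)ᶜ.powerset, (-1 : R) ^ V.card := by
          push_cast; rfl
        rw [← hz, Finset.sum_powerset_neg_one_pow_card]
        have himg : (Finset.univ.image g)ᶜ = ∅ ↔ Function.Surjective g := by
          rw [Finset.compl_eq_empty_iff, Finset.eq_univ_iff_forall]
          constructor
          · intro h y
            obtain ⟨x, -, hx⟩ := Finset.mem_image.mp (h y)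
            exact ⟨x, hx⟩
          · intro h y
            obtain ⟨x, hx⟩ := h y
            exact Finset.mem_image.mpr ⟨x, Finset.mem_univ x, hx⟩
        by_cases hs : Function.Surjective g
        · simp [himg.mpr hs, hs]
        · have hne : ¬(Finset.univ.image g)ᶜ = ∅ := fun h => hs (himg.mp h)
          simp [hne, hs]
    _ = ∑ g ∈ Finset.univ.filter (fun g : Fin d → Fin d => Function.Surjective g),
          ∏ m, s (g m) := by
        rw [Finset.sum_filter]
        refine Finset.sum_congr rfl fun g _ => ?_
        split <;> simp
    _ = ∑ π : Equiv.Perm (Fin d), ∏ m, s (π m) := by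
        refine Finset.sum_bij' (fun g hg => Equiv.ofBijective g ?_)
          (fun π _ => ⇑π) ?_ ?_ ?_ ?_ ?_
        · simp only [Finset.mem_filter] at hg
          exact Finite.surjective_iff_bijective.mp hg.2
        · intro g hg; exact Finset.mem_univ _
        · intro π _
          simp only [Finset.mem_filter, Finset.mem_univ, true_and]
          exact π.surjective
        · intro g hg; rfl
        · intro π _; ext x; rfl
        · intro g hg; rfl
    _ = (d.factorial : R) * ∏ t, s t := by
        have : ∀ π : Equiv.Perm (Fin d), ∏ m, s (π m) = ∏ t, s t := fun π =>
          Equiv.prod_comp π s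
        simp_rw [this]
        rw [Finset.sum_const, Finset.card_univ, Fintype.card_perm, Fintype.card_fin, nsmul_eq_mul]

lemma step_sum {k : Type*} [CommRing k] {d n : ℕ} (c : Fin n → k) (v : Fin d → Fin n → k) :
    ∑ S : Finset (Fin d), (-1 : k) ^ (d - S.card) * (∑ i, c i * (∑ t ∈ S, v t i) ^ d)
      = (d.factorial : k) * ∑ i, c i * ∏ t, v t i := by
  calc ∑ S : Finset (Fin d), (-1 : k) ^ (d - S.card) * (∑ i, c i * (∑ t ∈ S, v t i) ^ d)
      = ∑ i, ∑ S : Finset (Fin d), c i * ((-1 : k) ^ (d - S.card) * (∑ t ∈ S, v t i) ^ d) := by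
        simp_rw [Finset.mul_sum]
        rw [Finset.sum_comm]
        refine Finset.sum_congr rfl fun i _ => Finset.sum_congr rfl fun S _ => by ring
    _ = ∑ i, c i * ((d.factorial : k) * ∏ t, v t i) := by
        refine Finset.sum_congr rfl fun i _ => ?_
        rw [← Finset.mul_sum, polar_pow]
    _ = (d.factorial : k) * ∑ i, c i * ∏ t, v t i := by
        rw [Finset.mul_sum]
        exact Finset.sum_congr rfl fun i _ => by ring

/-- Two diagonal forms `⟨a₁,…,aₙ⟩` and `⟨b₁,…,bₙ⟩` of degree `d` over `k` are isomorphic: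
there is a bijective linear map `f : kⁿ → kⁿ` carrying one form (equivalently, since
`char k ∤ d!`, its associated symmetric `d`-linear form) to the other. -/
def DiagEquiv {k : Type*} [Field k] (d n : ℕ) (a b : Fin n → k) : Prop :=
  ∃ f : (Fin n → k) ≃ₗ[k] (Fin n → k),
    ∀ x : Fin n → k, ∑ i, b i * (f x) i ^ d = ∑ i, a i * x i ^ d

/-- **Let `d ≥ 3`, `k` a field with `char k ∤ d!`, and `a₁,…,aₙ, b₁,…,bₙ ∈ k^×`.  The
diagonal forms `⟨a₁,…,aₙ⟩` and `⟨b₁,…,bₙ⟩` of degree `d` are isomorphic if and only if there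
is a permutation `π ∈ Sₙ` with `bᵢ/a_{π(i)} ∈ (k^×)^d` for every `i`.** -/
theorem diagEquiv_iff_perm (k : Type*) [Field k] (d n : ℕ) (hd : 3 ≤ d)
    (hchar : (d.factorial : k) ≠ 0)
    (a b : Fin n → k) (ha : ∀ i, a i ≠ 0) (hb : ∀ i, b i ≠ 0) :
    DiagEquiv d n a b ↔
      ∃ π : Equiv.Perm (Fin n), ∀ i, ∃ c : k, c ≠ 0 ∧ b i = a (π i) * c ^ d := by
  have hd0 : d ≠ 0 := by omega
  constructor
  · rintro ⟨f, H⟩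
    -- the full multilinear identity
    have T : ∀ x : Fin d → (Fin n → k),
        ∑ i, b i * ∏ t, f (x t) i = ∑ j, a j * ∏ t, (x t) j := by
      intro x
      have h1 : ∀ S : Finset (Fin d),
          ∑ i, b i * (∑ t ∈ S, f (x t) i) ^ d = ∑ i, a i * (∑ t ∈ S, x t i) ^ d := by
        intro S
        have := H (∑ t ∈ S, x t)
        simpa [map_sum, Finset.sum_apply] using this
      have h4 : ∑ S : Finset (Fin d), (-1 : k) ^ (d - S.card)
            * (∑ i, b i * (∑ t ∈ S, f (x t) i) ^ d)
          = ∑ S : Finset (Fin d), (-1 : k) ^ (d - S.card)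
            * (∑ i, a i * (∑ t ∈ S, x t i) ^ d) :=
        Finset.sum_congr rfl fun S _ => by rw [h1 S]
      rw [step_sum b (fun t i => f (x t) i), step_sum a (fun t i => x t i)] at h4
      exact mul_left_cancel₀ hchar h4
    set N : Fin n → Fin n → k := fun j s => f.symm (Pi.single s 1) j with hN
    -- key orthogonality
    have key : ∀ (s s' : Fin n), s ≠ s' → ∀ j, N j s * N j s' = 0 := by
      intro s s' hss j
      set x : Fin d → (Fin n → k) := fun t =>
        if t.val = 0 then f.symm (Pi.single s 1)
        else if t.val = 1 then f.symm (Pi.single s' 1)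
        else Pi.single j 1 with hx
      have hT := T x
      have hx0 : x (⟨0, by omega⟩ : Fin d) = f.symm (Pi.single s 1) := by simp [hx]
      have hx1 : x (⟨1, by omega⟩ : Fin d) = f.symm (Pi.single s' 1) := by simp [hx]
      have hL : ∑ i, b i * ∏ t, f (x t) i = 0 := by
        refine Finset.sum_eq_zero fun i _ => ?_
        have hfx0 : f (x (⟨0, by omega⟩ : Fin d)) = Pi.single s 1 := by
          rw [hx0, f.apply_symm_apply]
        have hfx1 : f (x (⟨1, by omega⟩ : Fin d)) = Pi.single s' 1 := by
          rw [hx1, f.apply_symm_apply]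
        rcases eq_or_ne i s with rfl | his
        · have hz : f (x (⟨1, by omega⟩ : Fin d)) i = 0 := by
            rw [hfx1]; exact Pi.single_eq_of_ne hss 1
          rw [Finset.prod_eq_zero (Finset.mem_univ (⟨1, by omega⟩ : Fin d)) hz, mul_zero]
        · have hz : f (x (⟨0, by omega⟩ : Fin d)) i = 0 := by
            rw [hfx0]; exact Pi.single_eq_of_ne his 1
          rw [Finset.prod_eq_zero (Finset.mem_univ (⟨0, by omega⟩ : Fin d)) hz, mul_zero]
      have hR : ∑ j', a j' * ∏ t, (x t) j' = a j * (N j s * N j s') := by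
        rw [Finset.sum_eq_single j]
        · congr 1
          have h01 : (⟨1, by omega⟩ : Fin d) ∈
              Finset.univ.erase (⟨0, by omega⟩ : Fin d) := by
            simp [Finset.mem_erase, Fin.ext_iff]
          rw [← Finset.mul_prod_erase Finset.univ _
              (Finset.mem_univ (⟨0, by omega⟩ : Fin d)),
            ← Finset.mul_prod_erase _ _ h01]
          have hones : ∏ t ∈ (Finset.univ.erase
              (⟨0, by omega⟩ : Fin d)).erase (⟨1, by omega⟩ : Fin d), (x t) j = 1 := by
            refine Finset.prod_eq_one fun t ht => ?_
            simp only [Finset.mem_erase] at ht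
            have ht1 : t.val ≠ 1 := fun hc => ht.1 (Fin.ext hc)
            have ht0 : t.val ≠ 0 := fun hc => ht.2.1 (Fin.ext hc)
            have : x t = Pi.single j 1 := by simp [hx, ht0, ht1]
            rw [this, Pi.single_eq_same]
          rw [hones, mul_one, hx0, hx1]
        · intro j' _ hj'
          have hxt2 : x (⟨2, by omega⟩ : Fin d) = Pi.single j 1 := by simp [hx]
          have hz : (x (⟨2, by omega⟩ : Fin d)) j' = 0 := by
            rw [hxt2]; exact Pi.single_eq_of_ne hj' 1
          rw [Finset.prod_eq_zero (Finset.mem_univ (⟨2, by omega⟩ : Fin d)) hz, mul_zero]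
        · intro h; exact absurd (Finset.mem_univ j) h
      rw [hL, hR] at hT
      rcases mul_eq_zero.mp hT.symm with h | h
      · exact absurd h (ha j)
      · exact h
    -- coordinates of f.symm in terms of N
    have hzlin : ∀ (j : Fin n) (w : Fin n → k), f.symm w j = ∑ s, w s * N j s := by
      intro j w
      conv_lhs => rw [← Finset.univ_sum_single w]
      rw [map_sum, Finset.sum_apply]
      refine Finset.sum_congr rfl fun s _ => ?_
      have hsm : Pi.single s (w s) = w s • (Pi.single s 1 : Fin n → k) := by
        funext t
        rcases eq_or_ne t s with rfl | h
        · simp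
        · simp [Pi.single_eq_of_ne h]
      rw [hsm, map_smul]
      simp [hN]
    have rowex : ∀ j, ∃ s, N j s ≠ 0 := by
      intro j
      by_contra h
      push_neg at h
      have h1 : f.symm (f (Pi.single j 1)) j = 0 := by
        rw [hzlin]
        exact Finset.sum_eq_zero fun s _ => by rw [h s, mul_zero]
      rw [f.symm_apply_apply] at h1
      simp at h1
    choose σ hσ using rowex
    have hsupp : ∀ j s, s ≠ σ j → N j s = 0 := by
      intro j s hs
      rcases mul_eq_zero.mp (key s (σ j) hs j) with h | h
      · exact h
      · exact absurd h (hσ j)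
    have hinj : Function.Injective σ := by
      intro j j' hjj
      by_contra hne
      have e1 : f.symm (f (Pi.single j 1)) j = 1 := by rw [f.symm_apply_apply]; simp
      have e2 : f.symm (f (Pi.single j 1)) j' = 0 := by
        rw [f.symm_apply_apply]
        exact Pi.single_eq_of_ne (Ne.symm hne) 1
      rw [hzlin] at e1 e2
      rw [Finset.sum_eq_single (σ j)] at e1
      rotate_left
      · intro s _ hs; rw [hsupp j s hs, mul_zero]
      · intro h; exact absurd (Finset.mem_univ _) h
      rw [Finset.sum_eq_single (σ j')] at e2
      rotate_left
      · intro s _ hs; rw [hsupp j' s hs, mul_zero]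
      · intro h; exact absurd (Finset.mem_univ _) h
      have hw : f (Pi.single j 1) (σ j) ≠ 0 := fun h0 => by
        rw [h0, zero_mul] at e1; exact zero_ne_one e1
      rw [← hjj] at e2
      rcases mul_eq_zero.mp e2 with h | h
      · exact hw h
      · rw [hjj] at h; exact hσ j' h
    have hbij : Function.Bijective σ := Finite.injective_iff_bijective.mp hinj
    set σe : Equiv.Perm (Fin n) := Equiv.ofBijective σ hbij with hσe
    have hfe : ∀ j, f.symm (Pi.single (σ j) 1) = Pi.single j (N j (σ j)) := by
      intro j
      funext j''
      rcases eq_or_ne j'' j with rfl | h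
      · simp only [Pi.single_eq_same]; rfl
      · rw [Pi.single_eq_of_ne h]
        exact hsupp j'' (σ j) (fun hc => h ((hinj hc).symm))
    have hbs : ∀ j, b (σ j) = a j * (N j (σ j)) ^ d := by
      intro j
      have hfj : f (Pi.single j (N j (σ j))) = Pi.single (σ j) 1 := by
        rw [← hfe j, f.apply_symm_apply]
      have hH := H (Pi.single j (N j (σ j)))
      rw [hfj] at hH
      have hLs : ∑ i, b i * (Pi.single (σ j) 1 : Fin n → k) i ^ d = b (σ j) := by
        rw [Finset.sum_eq_single (σ j)]
        · simp
        · intro i _ hi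
          rw [show (Pi.single (σ j) (1 : k) : Fin n → k) i = 0 from
            Pi.single_eq_of_ne hi 1, zero_pow hd0, mul_zero]
        · intro h; exact absurd (Finset.mem_univ _) h
      have hRs : ∑ i, a i * (Pi.single j (N j (σ j)) : Fin n → k) i ^ d = a j * (N j (σ j)) ^ d := by
        rw [Finset.sum_eq_single j]
        · simp
        · intro i _ hi
          rw [show (Pi.single j (N j (σ j)) : Fin n → k) i = 0 from
            Pi.single_eq_of_ne hi _, zero_pow hd0, mul_zero]
        · intro h; exact absurd (Finset.mem_univ _) h
      rw [hLs, hRs] at hH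
      exact hH
    refine ⟨σe.symm, fun i => ?_⟩
    have h2 : σ (σe.symm i) = i := σe.apply_symm_apply i
    have h1 := hbs (σe.symm i)
    rw [h2] at h1
    have h3 := hσ (σe.symm i)
    rw [h2] at h3
    exact ⟨N (σe.symm i) i, h3, h1⟩
  · rintro ⟨π, hπ⟩
    choose c hc0 hcb using hπ
    refine ⟨LinearEquiv.mk ⟨⟨fun x i => (c i)⁻¹ * x (π i), ?_⟩, ?_⟩
      (fun y j => c (π.symm j) * y (π.symm j)) ?_ ?_, ?_⟩
    · intro x y; funext i; simp [mul_add]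
    · intro r x; funext i; simp [smul_eq_mul]; ring
    · intro x; funext j
      simp only []
      rw [Equiv.apply_symm_apply]
      rw [← mul_assoc, mul_inv_cancel₀ (hc0 _), one_mul]
    · intro y; funext i
      simp only []
      rw [Equiv.symm_apply_apply]
      rw [← mul_assoc, inv_mul_cancel₀ (hc0 _), one_mul]
    · intro x
      have hterm : ∀ i, b i * ((c i)⁻¹ * x (π i)) ^ d = a (π i) * x (π i) ^ d := by
        intro i
        rw [hcb i, mul_pow, inv_pow]
        have hcd : (c i) ^ d ≠ 0 := pow_ne_zero _ (hc0 i)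
        field_simp
      calc ∑ i, b i * ((fun x i => (c i)⁻¹ * x (π i)) x) i ^ d
          = ∑ i, a (π i) * x (π i) ^ d :=
            Finset.sum_congr rfl fun i _ => hterm i
        _ = ∑ i, a i * x i ^ d := Equiv.sum_comp π (fun j => a j * x j ^ d)
end
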